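/- arXiv:1410.3486 — 13 statements merged into one kernel-verified Lean document; each statement's English description precedes it below -/
import Mathlib

section
/- Let M be a monoid satisfying the unique product property (a u.p.-monoid) and let R be a central reduced ring, i.e., every nilpotent element of R lies in the center of R. Then R is M-central Armendariz: whenever α, β ∈ R[M] satisfy αβ = 0, the product (α g)·(β h) lies in the center of R for every g in the support of α and every h in the support of β. -/
open Finsupp MonoidAlgebra

private lemma mul_swap_zero {R : Type*} [Ring R] [IsReduced R] {a b : R}
    (h : a * b = 0) : b * a = 0 := by
  have h2 : (b * a) ^ 2 = 0 := by
    rw [sq, mul_assoc, ← mul_assoc a, h, zero_mul, mul_zero]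
  exact IsNilpotent.eq_zero ⟨2, h2⟩

/-- Liu's theorem: over a u.p.-monoid, a reduced ring is M-Armendariz. -/
private lemma red_key {M R : Type*} [Monoid M] [Ring R] [UniqueProds M] [IsReduced R] :
    ∀ n : ℕ, ∀ α β : MonoidAlgebra R M, α.coeff.support.card + β.coeff.support.card ≤ n →
      α * β = 0 → ∀ g h : M, α.coeff g * β.coeff h = 0 := by
  classical
  intro n
  induction n with
  | zero =>
    intro α β hc _ g h
    have hA : α.coeff.support.card = 0 := Nat.le_zero.mp (le_trans (Nat.le_add_right _ _) hc)
    have : α = 0 := MonoidAlgebra.coeff_eq_zero.mp (Finsupp.support_eq_empty.mp (Finset.card_eq_zero.mp hA))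
    simp [this]
  | succ n IH =>
    intro α β hc hmul g h
    by_cases hg : g ∈ α.coeff.support
    · by_cases hh : h ∈ β.coeff.support
      · obtain ⟨g0, hg0, h0, hh0, hu⟩ :=
          UniqueProds.uniqueMul_of_nonempty ⟨g, hg⟩ ⟨h, hh⟩
        have key : α.coeff g0 * β.coeff h0 = 0 := by
          have := MonoidAlgebra.coeff_mul_mul_of_uniqueMul hu
          rw [hmul] at this
          simpa using this.symm
        have hswap : β.coeff h0 * α.coeff g0 = 0 := mul_swap_zero key
        set β' : MonoidAlgebra R M := β * MonoidAlgebra.single 1 (α.coeff g0) with hβ'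
        have hβ'app : ∀ x, β'.coeff x = β.coeff x * α.coeff g0 := fun x =>
          MonoidAlgebra.coeff_mul_single_one β _ x
        have hsupp : β'.coeff.support ⊆ β.coeff.support.erase h0 := by
          intro x hx
          have hxne := Finsupp.mem_support_iff.mp hx
          rw [hβ'app] at hxne
          rw [Finset.mem_erase]
          constructor
          · rintro rfl; exact hxne hswap
          · rw [Finsupp.mem_support_iff]
            intro hz; rw [hz, zero_mul] at hxne; exact hxne rfl
        have hc' : α.coeff.support.card + β'.coeff.support.card ≤ n := by
          have h1 : β'.coeff.support.card ≤ (β.coeff.support.erase h0).card :=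
            Finset.card_le_card hsupp
          have h2 : (β.coeff.support.erase h0).card = β.coeff.support.card - 1 :=
            Finset.card_erase_of_mem hh0
          have h3 : 1 ≤ β.coeff.support.card := Finset.card_pos.mpr ⟨h0, hh0⟩
          omega
        have hmul' : α * β' = 0 := by rw [hβ', ← mul_assoc, hmul, zero_mul]
        have IH1 : ∀ x y, α.coeff x * β'.coeff y = 0 := IH α β' hc' hmul'
        have hA : ∀ y, α.coeff g0 * β.coeff y = 0 := by
          intro y
          have h1 : α.coeff g0 * (β.coeff y * α.coeff g0) = 0 := by rw [← hβ'app]; exact IH1 g0 y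
          have h2 : (β.coeff y * α.coeff g0) * (β.coeff y * α.coeff g0) = 0 := by
            rw [mul_assoc (β.coeff y), h1, mul_zero]
          have h3 : β.coeff y * α.coeff g0 = 0 := IsNilpotent.eq_zero ⟨2, by rw [sq, h2]⟩
          exact mul_swap_zero h3
        have hsing : (MonoidAlgebra.single g0 (α.coeff g0) : MonoidAlgebra R M) * β = 0 := by
          rw [MonoidAlgebra.mul_def, MonoidAlgebra.coeff_single, Finsupp.sum_single_index]
          · apply Finset.sum_eq_zero
            intro a _
            show MonoidAlgebra.single (g0 * a) (α.coeff g0 * β.coeff a) = 0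
            rw [hA a]
            simp
          · simp
        set α₂ : MonoidAlgebra R M := α - MonoidAlgebra.single g0 (α.coeff g0) with hα₂
        have hα₂app : ∀ x, x ≠ g0 → α₂.coeff x = α.coeff x := by
          intro x hx
          rw [hα₂, MonoidAlgebra.coeff_sub, Finsupp.sub_apply, MonoidAlgebra.coeff_single, Finsupp.single_eq_of_ne' (Ne.symm hx), sub_zero]
        have hα₂g0 : α₂.coeff g0 = 0 := by
          rw [hα₂, MonoidAlgebra.coeff_sub, Finsupp.sub_apply, MonoidAlgebra.coeff_single, Finsupp.single_eq_same, sub_self]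
        have hsupp₂ : α₂.coeff.support ⊆ α.coeff.support.erase g0 := by
          intro x hx
          have hxne := Finsupp.mem_support_iff.mp hx
          rw [Finset.mem_erase]
          constructor
          · rintro rfl; exact hxne hα₂g0
          · rw [Finsupp.mem_support_iff]
            intro hz
            by_cases hxg : x = g0
            · subst hxg; exact hxne hα₂g0
            · rw [hα₂app x hxg] at hxne; exact hxne hz
        have herase : α₂ * β = 0 := by
          rw [hα₂, sub_mul, hmul, hsing, sub_zero]
        have hc'' : α₂.coeff.support.card + β.coeff.support.card ≤ n := by
          have h1 : α₂.coeff.support.card ≤ (α.coeff.support.erase g0).card :=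
            Finset.card_le_card hsupp₂
          have h2 : (α.coeff.support.erase g0).card = α.coeff.support.card - 1 :=
            Finset.card_erase_of_mem hg0
          have h3 : 1 ≤ α.coeff.support.card := Finset.card_pos.mpr ⟨g0, hg0⟩
          omega
        have IH2 := IH α₂ β hc'' herase
        by_cases hgg : g = g0
        · rw [hgg]; exact hA h
        · have := IH2 g h
          rwa [hα₂app g hgg] at this
      · rw [Finsupp.notMem_support_iff.mp hh, mul_zero]
    · rw [Finsupp.notMem_support_iff.mp hg, zero_mul]

/-- If `M` is a u.p.-monoid and `R` is central reduced (every nilpotent element is central),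
then `R` is `M`-central Armendariz. -/
theorem stmt_0 (M R : Type*) [Monoid M] [Ring R] [UniqueProds M]
    (hred : ∀ a : R, IsNilpotent a → a ∈ Set.center R) :
    ∀ α β : MonoidAlgebra R M, α * β = 0 →
      ∀ g ∈ α.coeff.support, ∀ h ∈ β.coeff.support, α.coeff g * β.coeff h ∈ Set.center R := by
  classical
  have hcomm : ∀ a : R, IsNilpotent a → ∀ b : R, Commute a b := by
    intro a ha b
    exact (Set.mem_center_iff.mp (hred a ha)).comm b
  -- the congruence "differ by a nilpotent"
  let c : RingCon R :=
    { r := fun a b => IsNilpotent (a - b)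
      iseqv := by
        refine ⟨fun a => by simp, fun {a b} hab => ?_, fun {a b d} hab hbd => ?_⟩
        · simpa using hab.neg
        · have := (hcomm _ hab (b - d)).isNilpotent_add hab hbd
          simpa using this
      mul' := by
        intro a b x y hab hxy
        have hab' : IsNilpotent (a - b) := hab
        have hxy' : IsNilpotent (x - y) := hxy
        have h1 : IsNilpotent (a * (x - y)) := by
          have hcx := (hcomm _ hxy' a).symm
          obtain ⟨k, hk⟩ := hxy'
          exact ⟨k, by rw [hcx.mul_pow, hk, mul_zero]⟩
        have h2 : IsNilpotent ((a - b) * y) := by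
          have hcy := hcomm _ hab' y
          obtain ⟨k, hk⟩ := hab'
          exact ⟨k, by rw [hcy.mul_pow, hk, zero_mul]⟩
        have h3 := (hcomm _ h1 _).isNilpotent_add h1 h2
        have he : a * x - b * y = a * (x - y) + (a - b) * y := by
          rw [mul_sub, sub_mul]; abel
        show IsNilpotent (a * x - b * y)
        rwa [he]
      add' := by
        intro a b x y hab hxy
        have hab' : IsNilpotent (a - b) := hab
        have hxy' : IsNilpotent (x - y) := hxy
        have h3 := (hcomm _ hab' (x - y)).isNilpotent_add hab' hxy'
        have he : a + x - (b + y) = a - b + (x - y) := by abel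
        show IsNilpotent (a + x - (b + y))
        rwa [he] }
  haveI : IsReduced c.Quotient := by
    constructor
    intro x hx
    obtain ⟨a, rfl⟩ : ∃ a : R, (a : c.Quotient) = x := Quotient.exists_rep x
    obtain ⟨k, hk⟩ := hx
    have hk' : ((a ^ k : R) : c.Quotient) = ((0 : R) : c.Quotient) := by
      rw [RingCon.coe_pow, hk, RingCon.coe_zero]
    have h1 : c (a ^ k) 0 := c.eq.mp hk'
    have h2 : IsNilpotent (a ^ k - 0) := h1
    have h2' : IsNilpotent (a ^ k) := by simpa using h2
    have h3 : IsNilpotent a := by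
      obtain ⟨m, hm⟩ := h2'
      exact ⟨k * m, by rw [pow_mul, hm]⟩
    have h4 : c a 0 := show IsNilpotent (a - 0) by simpa using h3
    show ((a : R) : c.Quotient) = 0
    rw [← RingCon.coe_zero]
    exact c.eq.mpr h4
  -- the coefficient-mapping ring hom
  have hcm : ∀ (x : R) (y : M),
      Commute ((MonoidAlgebra.singleOneRingHom.comp c.mk' : R →+* MonoidAlgebra c.Quotient M) x)
        ((MonoidAlgebra.of c.Quotient M) y) := by
    intro x y
    show MonoidAlgebra.single (1 : M) (c.mk' x) * MonoidAlgebra.single y (1 : c.Quotient)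
        = MonoidAlgebra.single y (1 : c.Quotient) * MonoidAlgebra.single (1 : M) (c.mk' x)
    rw [MonoidAlgebra.single_mul_single, MonoidAlgebra.single_mul_single]
    simp
  let Φ : MonoidAlgebra R M →+* MonoidAlgebra c.Quotient M :=
    MonoidAlgebra.liftNCRingHom (MonoidAlgebra.singleOneRingHom.comp c.mk')
      (MonoidAlgebra.of c.Quotient M) hcm
  have hΦsingle : ∀ (a : M) (b : R),
      Φ (MonoidAlgebra.single a b) = MonoidAlgebra.single a (c.mk' b) := by
    intro a b
    show MonoidAlgebra.liftNC
        ((MonoidAlgebra.singleOneRingHom.comp c.mk' :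
          R →+* MonoidAlgebra c.Quotient M) : R →+ MonoidAlgebra c.Quotient M)
        (MonoidAlgebra.of c.Quotient M) (MonoidAlgebra.single a b)
        = MonoidAlgebra.single a (c.mk' b)
    rw [MonoidAlgebra.liftNC_single]
    show MonoidAlgebra.single (1 : M) (c.mk' b) * MonoidAlgebra.single a (1 : c.Quotient)
        = MonoidAlgebra.single a (c.mk' b)
    rw [MonoidAlgebra.single_mul_single]
    simp
  have hΦ : ∀ γ : MonoidAlgebra R M, (Φ γ).coeff = Finsupp.mapRange (c.mk') (map_zero _) γ.coeff := by
    intro γ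
    induction γ using MonoidAlgebra.induction_linear with
    | zero => simp
    | add f g hf hg => rw [map_add, MonoidAlgebra.coeff_add, hf, hg, MonoidAlgebra.coeff_add, Finsupp.mapRange_add (map_add _)]
    | single a b => rw [hΦsingle, MonoidAlgebra.coeff_single, MonoidAlgebra.coeff_single, Finsupp.mapRange_single]
  intro α β hmul g hg h hh
  have hmul' : Φ α * Φ β = 0 := by rw [← map_mul, hmul, map_zero]
  have hkey := red_key ((Φ α).coeff.support.card + (Φ β).coeff.support.card) (Φ α) (Φ β) le_rfl hmul' g h
  rw [hΦ, hΦ, Finsupp.mapRange_apply, Finsupp.mapRange_apply, ← map_mul] at hkey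
  have hz : ((α.coeff g * β.coeff h : R) : c.Quotient) = ((0 : R) : c.Quotient) := by
    rw [RingCon.coe_zero]
    exact hkey
  have hnil : IsNilpotent (α.coeff g * β.coeff h - 0) := c.eq.mp hz
  exact hred _ (by simpa using hnil)
end

section
/- Let M be a monoid and R a ring. If R is M-central Armendariz, then either R is commutative or M is cancellative (both left and right cancellative). -/
/-- If `R` is `M`-central Armendariz, then either `R` is commutative or `M` is cancellative. -/
theorem stmt_1 (M R : Type*) [Monoid M] [Ring R]
    (hCA : ∀ α β : MonoidAlgebra R M, α * β = 0 →
      ∀ g ∈ α.coeff.support, ∀ h ∈ β.coeff.support, α.coeff g * β.coeff h ∈ Set.center R) :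
    (∀ a b : R, a * b = b * a) ∨
      ((∀ m g h : M, m * g = m * h → g = h) ∧ (∀ m g h : M, g * m = h * m → g = h)) := by
  by_cases hc : ∀ a b : R, a * b = b * a
  · exact Or.inl hc
  right
  push_neg at hc
  obtain ⟨a, b, hab⟩ := hc
  have h10 : (1 : R) ≠ 0 := by
    intro h
    haveI := subsingleton_of_zero_eq_one h.symm
    exact hab (Subsingleton.elim _ _)
  have hsub : ∀ (f g : MonoidAlgebra R M) (y : M), (f - g).coeff y = f.coeff y - g.coeff y :=
    fun f g y => Finsupp.sub_apply f.coeff g.coeff y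
  have comm_of_center : (∀ x : R, x ∈ Set.center R) → False := by
    intro hx
    exact hab (((Set.mem_center_iff.mp (hx b)).comm a).symm)
  constructor
  · intro m g h hmgh
    by_contra hgh
    apply comm_of_center
    intro x
    by_cases hx : x = 0
    · simpa [hx] using Set.zero_mem_center (M₀ := R)
    set α : MonoidAlgebra R M := MonoidAlgebra.single m x with hα
    set β : MonoidAlgebra R M := MonoidAlgebra.single g 1 - MonoidAlgebra.single h 1 with hβ
    have hmul : α * β = 0 := by
      rw [hα, hβ, mul_sub, MonoidAlgebra.single_mul_single,
        MonoidAlgebra.single_mul_single, hmgh, sub_self]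
    have hm : m ∈ α.coeff.support := by
      simp [hα, Finsupp.mem_support_iff, hx, MonoidAlgebra.coeff_single]
    have hg : g ∈ β.coeff.support := by
      simp [hβ, Finsupp.mem_support_iff, hsub, MonoidAlgebra.coeff_single, Finsupp.single_apply,
        hgh, Ne.symm hgh, h10]
    have := hCA α β hmul m hm g hg
    have hαm : α.coeff m = x := by simp [hα, MonoidAlgebra.coeff_single]
    have hβg : β.coeff g = 1 := by
      simp [hβ, hsub, MonoidAlgebra.coeff_single, Finsupp.single_apply, hgh, Ne.symm hgh]
    rwa [hαm, hβg, mul_one] at this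
  · intro m g h hmgh
    by_contra hgh
    apply comm_of_center
    intro x
    by_cases hx : x = 0
    · simpa [hx] using Set.zero_mem_center (M₀ := R)
    set α : MonoidAlgebra R M := MonoidAlgebra.single g x - MonoidAlgebra.single h x with hα
    set β : MonoidAlgebra R M := MonoidAlgebra.single m 1 with hβ
    have hmul : α * β = 0 := by
      rw [hα, hβ, sub_mul, MonoidAlgebra.single_mul_single,
        MonoidAlgebra.single_mul_single, hmgh, sub_self]
    have hg : g ∈ α.coeff.support := by
      simp [hα, Finsupp.mem_support_iff, hsub, MonoidAlgebra.coeff_single, Finsupp.single_apply,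
        hgh, Ne.symm hgh, hx]
    have hm : m ∈ β.coeff.support := by
      simp [hβ, Finsupp.mem_support_iff, h10, MonoidAlgebra.coeff_single]
    have := hCA α β hmul g hg m hm
    have hαg : α.coeff g = x := by
      simp [hα, hsub, MonoidAlgebra.coeff_single, Finsupp.single_apply, hgh, Ne.symm hgh]
    have hβm : β.coeff m = 1 := by simp [hβ, MonoidAlgebra.coeff_single]
    rwa [hαg, hβm, mul_one] at this
end

section
/- Let M be a monoid with at least two elements and R a ring. If R is M-central Armendariz, then R is Abelian, i.e., every idempotent element of R is central. -/
lemma key_armendariz (M R : Type*) [Monoid M] [Nontrivial M] [Ring R]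
    (hCA : ∀ α β : MonoidAlgebra R M, α * β = 0 →
      ∀ g ∈ α.coeff.support, ∀ h ∈ β.coeff.support, α.coeff g * β.coeff h ∈ Set.center R)
    (e : R) (he : e * e = e) (r : R) : e * r * (1 - e) = 0 := by
  set a := e * r * (1 - e) with ha_def
  by_contra ha
  obtain ⟨g, hg⟩ := exists_ne (1 : M)
  have hea : e * a = a := by rw [ha_def, ← mul_assoc, ← mul_assoc, he]
  have hae : a * e = 0 := by
    rw [ha_def, mul_assoc, sub_mul, one_mul, he, sub_self, mul_zero]
  have ha1e : a * (1 - e) = a := by rw [mul_sub, mul_one, hae, sub_zero]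
  have haa : a * a = 0 := by
    calc a * a = a * e * (r * (1 - e)) := by rw [ha_def]; noncomm_ring
      _ = 0 := by rw [hae, zero_mul]
  have he1 : e * (1 - e) = 0 := by rw [mul_sub, mul_one, he, sub_self]
  set α : MonoidAlgebra R M :=
    MonoidAlgebra.single 1 e + MonoidAlgebra.single g a with hα
  set β : MonoidAlgebra R M :=
    MonoidAlgebra.single 1 (1 - e) + MonoidAlgebra.single g (-a) with hβ
  have hmul : α * β = 0 := by
    rw [hα, hβ, add_mul, mul_add, mul_add]
    simp only [MonoidAlgebra.single_mul_single, one_mul, mul_one]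
    rw [he1, mul_neg, hea, ha1e, mul_neg, haa]
    simp
  have hαg : α.coeff g = a := by
    rw [hα, MonoidAlgebra.coeff_add, MonoidAlgebra.coeff_single, MonoidAlgebra.coeff_single,
      Finsupp.add_apply, Finsupp.single_eq_of_ne' hg.symm,
      Finsupp.single_eq_same, zero_add]
  have hβ1 : β.coeff 1 = 1 - e := by
    rw [hβ, MonoidAlgebra.coeff_add, MonoidAlgebra.coeff_single, MonoidAlgebra.coeff_single,
      Finsupp.add_apply, Finsupp.single_eq_same,
      Finsupp.single_eq_of_ne' hg, add_zero]
  have hgs : g ∈ α.coeff.support := by rw [Finsupp.mem_support_iff, hαg]; exact ha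
  have h1s : (1 : M) ∈ β.coeff.support := by
    rw [Finsupp.mem_support_iff, hβ1]
    intro h
    have he1' : e = 1 := (sub_eq_zero.mp h).symm
    apply ha
    rw [ha_def, he1']
    simp
  have hc := hCA α β hmul g hgs 1 h1s
  rw [hαg, hβ1, ha1e] at hc
  rw [Semigroup.mem_center_iff] at hc
  apply ha
  rw [← hea, hc e, hae]

/-- If `|M| ≥ 2` and `R` is `M`-central Armendariz, then `R` is Abelian. -/
theorem stmt_2 (M R : Type*) [Monoid M] [Nontrivial M] [Ring R]
    (hCA : ∀ α β : MonoidAlgebra R M, α * β = 0 →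
      ∀ g ∈ α.coeff.support, ∀ h ∈ β.coeff.support, α.coeff g * β.coeff h ∈ Set.center R) :
    ∀ f : R, IsIdempotentElem f → f ∈ Set.center R := by
  intro f hf
  rw [Semigroup.mem_center_iff]
  intro b
  have h1 : f * b * (1 - f) = 0 := key_armendariz M R hCA f hf b
  have hf' : (1 - f) * (1 - f) = 1 - f := by
    rw [sub_mul, one_mul, mul_sub, mul_one, hf.eq]
    simp
  have h2 : (1 - f) * b * (1 - (1 - f)) = 0 := key_armendariz M R hCA (1 - f) hf' b
  rw [sub_sub_cancel] at h2
  rw [mul_sub, mul_one, sub_eq_zero] at h1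
  rw [sub_mul, one_mul, sub_mul, sub_eq_zero] at h2
  rw [h2, ← h1]
end

section
/- Let M be a monoid, R a ring, and f a central idempotent of R. Regard fR and (1−f)R as non-unital subrings of R (each is closed under addition, negation, and multiplication). If both fR and (1−f)R are M-central Armendariz (i.e., for all α, β in the monoid algebra over fR with αβ = 0, each coefficient product (α g)·(β h) commutes with every element of fR, and similarly for (1−f)R), then R is M-central Armendariz. -/
noncomputable def nonUnitalConv {M S : Type*} [Mul M] [NonUnitalNonAssocRing S]
    (α β : M →₀ S) : M →₀ S :=
  α.sum fun g a => β.sum fun h b => Finsupp.single (g * h) (a * b)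

lemma nonUnitalConv_mapRange {M R S : Type*} [Mul M] [NonUnitalNonAssocRing R]
    [NonUnitalNonAssocRing S] (φ : R →+ S) (hφ : ∀ a b : R, φ (a * b) = φ a * φ b)
    (α β : M →₀ R) :
    nonUnitalConv (α.mapRange φ φ.map_zero) (β.mapRange φ φ.map_zero) =
      (nonUnitalConv α β).mapRange φ φ.map_zero := by
  unfold nonUnitalConv
  rw [Finsupp.sum_mapRange_index (by simp)]
  have hmr : ∀ γ : M →₀ R, Finsupp.mapRange φ φ.map_zero γ =
      Finsupp.mapRange.addMonoidHom φ γ := fun _ => rfl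
  conv_rhs => rw [hmr, map_finsuppSum]
  refine Finsupp.sum_congr fun g _ => ?_
  rw [Finsupp.sum_mapRange_index (by simp), map_finsuppSum]
  refine Finsupp.sum_congr fun h _ => ?_
  rw [← hmr, Finsupp.mapRange_single, hφ]

/-- Key auxiliary lemma: for a central idempotent `e` whose corner ring is `M`-central
Armendariz, the `e`-component of a coefficient product commutes with the corner. -/
lemma auxA {M R : Type*} [Monoid M] [Ring R] (e : R) (he : e * e = e)
    (hcomm : ∀ y : R, e * y = y * e) (S : NonUnitalSubring R)
    (hmem : ∀ r : R, e * r ∈ S)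
    (hSA : ∀ α β : M →₀ S, nonUnitalConv α β = 0 →
      ∀ g ∈ α.support, ∀ h ∈ β.support, ∀ s : S, α g * β h * s = s * (α g * β h))
    (α β : MonoidAlgebra R M) (h0 : α * β = 0) (g h : M) (r : R) :
    (e * (α.coeff g * β.coeff h)) * (e * r) = (e * r) * (e * (α.coeff g * β.coeff h)) := by
  have key : ∀ a b : R, (e * a) * (e * b) = e * (a * b) := by
    intro a b
    calc (e * a) * (e * b) = e * (a * (e * b)) := mul_assoc _ _ _
      _ = e * ((a * e) * b) := by rw [mul_assoc a e b]
      _ = e * ((e * a) * b) := by rw [← hcomm a]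
      _ = e * (e * (a * b)) := by rw [mul_assoc e a b]
      _ = (e * e) * (a * b) := (mul_assoc _ _ _).symm
      _ = e * (a * b) := by rw [he]
  set φ : R →+ S :=
    { toFun := fun r => ⟨e * r, hmem r⟩
      map_zero' := Subtype.ext (mul_zero e)
      map_add' := fun a b => Subtype.ext (mul_add e a b) } with hφdef
  have hφ : ∀ a b : R, φ (a * b) = φ a * φ b := fun a b => Subtype.ext (key a b).symm
  set αS : M →₀ S := α.coeff.mapRange φ φ.map_zero with hαS
  set βS : M →₀ S := β.coeff.mapRange φ φ.map_zero with hβS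
  have hconv : nonUnitalConv αS βS = 0 := by
    rw [hαS, hβS, nonUnitalConv_mapRange φ hφ]
    have : nonUnitalConv α.coeff β.coeff = (α * β).coeff := by
      simp only [MonoidAlgebra.mul_def, MonoidAlgebra.coeff_finsuppSum, MonoidAlgebra.coeff_single]; rfl
    rw [this, h0]
    ext m; simp
  by_cases hg : φ (α.coeff g) = 0
  · have : e * α.coeff g = 0 := congrArg Subtype.val hg
    have hz : e * (α.coeff g * β.coeff h) = 0 := by rw [← mul_assoc, this, zero_mul]
    rw [hz, zero_mul, mul_zero]
  by_cases hh : φ (β.coeff h) = 0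
  · have h1 : e * β.coeff h = 0 := congrArg Subtype.val hh
    have hz : e * (α.coeff g * β.coeff h) = 0 := by
      rw [← mul_assoc, hcomm (α.coeff g), mul_assoc, h1, mul_zero]
    rw [hz, zero_mul, mul_zero]
  · have hg' : g ∈ αS.support := by
      rw [hαS, Finsupp.mem_support_iff, Finsupp.mapRange_apply]; exact hg
    have hh' : h ∈ βS.support := by
      rw [hβS, Finsupp.mem_support_iff, Finsupp.mapRange_apply]; exact hh
    have := hSA αS βS hconv g hg' h hh' (φ r)
    have hval := congrArg Subtype.val this
    have hag : αS g = φ (α.coeff g) := by rw [hαS, Finsupp.mapRange_apply]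
    have hbh : βS h = φ (β.coeff h) := by rw [hβS, Finsupp.mapRange_apply]
    rw [hag, hbh, ← hφ] at hval
    have hcoe : ∀ y : R, ((φ y : S) : R) = e * y := fun _ => rfl
    simp only [MulMemClass.coe_mul, hcoe] at hval
    exact hval

lemma aux2 {R : Type*} [Ring R] (c x r : R) (hc : c * c = c) (hcomm : ∀ y : R, c * y = y * c)
    (hA : (c * x) * (c * r) = (c * r) * (c * x)) : c * (x * r) = c * (r * x) := by
  have key : ∀ a b : R, (c * a) * (c * b) = c * (a * b) := by
    intro a b
    calc (c * a) * (c * b) = c * (a * (c * b)) := mul_assoc _ _ _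
      _ = c * ((a * c) * b) := by rw [mul_assoc a c b]
      _ = c * ((c * a) * b) := by rw [← hcomm a]
      _ = c * (c * (a * b)) := by rw [mul_assoc c a b]
      _ = (c * c) * (a * b) := (mul_assoc _ _ _).symm
      _ = c * (a * b) := by rw [hc]
  calc c * (x * r) = (c * x) * (c * r) := (key x r).symm
    _ = (c * r) * (c * x) := hA
    _ = c * (r * x) := key r x

/-- If `f` is a central idempotent of `R` such that the non-unital subrings `fR` and `(1-f)R`
are `M`-central Armendariz, then `R` is `M`-central Armendariz. -/
theorem stmt_4 (M R : Type*) [Monoid M] [Ring R] (f : R)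
    (hf : IsIdempotentElem f) (hfc : f ∈ Set.center R)
    (S T : NonUnitalSubring R)
    (hS : ∀ x : R, x ∈ S ↔ ∃ r : R, x = f * r)
    (hT : ∀ x : R, x ∈ T ↔ ∃ r : R, x = (1 - f) * r)
    (hSA : ∀ α β : M →₀ S, nonUnitalConv α β = 0 →
      ∀ g ∈ α.support, ∀ h ∈ β.support, ∀ s : S, α g * β h * s = s * (α g * β h))
    (hTA : ∀ α β : M →₀ T, nonUnitalConv α β = 0 →
      ∀ g ∈ α.support, ∀ h ∈ β.support, ∀ t : T, α g * β h * t = t * (α g * β h)) :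
    ∀ α β : MonoidAlgebra R M, α * β = 0 →
      ∀ g ∈ α.coeff.support, ∀ h ∈ β.coeff.support, α.coeff g * β.coeff h ∈ Set.center R := by
  intro α β h0 g _ h _
  rw [Semigroup.mem_center_iff]
  intro r
  set x := α.coeff g * β.coeff h with hx
  have hcomm : ∀ y : R, f * y = y * f := fun y => (Semigroup.mem_center_iff.mp hfc y).symm
  have hf' : (1 - f) * (1 - f) = 1 - f := by
    have := hf
    unfold IsIdempotentElem at this
    rw [mul_sub, sub_mul, sub_mul, one_mul, mul_one, this]
    simp
  have hcomm' : ∀ y : R, (1 - f) * y = y * (1 - f) := by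
    intro y; rw [sub_mul, mul_sub, one_mul, mul_one, hcomm y]
  have hmemS : ∀ r : R, f * r ∈ S := fun r => (hS _).2 ⟨r, rfl⟩
  have hmemT : ∀ r : R, (1 - f) * r ∈ T := fun r => (hT _).2 ⟨r, rfl⟩
  have hA := auxA f hf hcomm S hmemS hSA α β h0 g h r
  have hB := auxA (1 - f) hf' hcomm' T hmemT hTA α β h0 g h r
  have e1 : f * (x * r) = f * (r * x) := aux2 f x r hf hcomm hA
  have e2 : (1 - f) * (x * r) = (1 - f) * (r * x) := aux2 (1 - f) x r hf' hcomm' hB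
  have hone : f + (1 - f) = 1 := by abel
  calc r * x = 1 * (r * x) := (one_mul _).symm
    _ = (f + (1 - f)) * (r * x) := by rw [hone]
    _ = f * (r * x) + (1 - f) * (r * x) := add_mul _ _ _
    _ = f * (x * r) + (1 - f) * (x * r) := by rw [e1, e2]
    _ = (f + (1 - f)) * (x * r) := (add_mul _ _ _).symm
    _ = x * r := by rw [hone, one_mul]
end

section
/- Let M be a monoid with at least two elements and R a ring. If R is M-Armendariz, then R is Abelian, i.e., every idempotent element of R is central. -/
private lemma key_aux {M R : Type*} [Monoid M] [Nontrivial M] [Ring R]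
    (hA : ∀ α β : MonoidAlgebra R M, α * β = 0 →
      ∀ g ∈ α.coeff.support, ∀ h ∈ β.coeff.support, α.coeff g * β.coeff h = 0)
    (u v c : R) (huv : u * v = 0) (huc : u * c = c) (hcv : c * v = c)
    (hcc : c * c = 0) : c = 0 := by
  by_contra hc
  have hu : u ≠ 0 := fun h => hc (by rw [← huc, h, zero_mul])
  obtain ⟨g, hg⟩ := exists_ne (1 : M)
  set α : MonoidAlgebra R M :=
    MonoidAlgebra.single 1 u + MonoidAlgebra.single g (-c) with hαdef
  set β : MonoidAlgebra R M :=
    MonoidAlgebra.single 1 v + MonoidAlgebra.single g c with hβdef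
  have hαβ : α * β = 0 := by
    simp only [hαdef, hβdef, mul_add, add_mul, MonoidAlgebra.single_mul_single,
      one_mul, mul_one, neg_mul, huv, huc, hcv, hcc, neg_zero,
      MonoidAlgebra.single_zero]
    ext x
    simp [Finsupp.single_apply]
  have hα1 : α.coeff 1 = u := by
    rw [hαdef, MonoidAlgebra.coeff_add, MonoidAlgebra.coeff_single, MonoidAlgebra.coeff_single, Finsupp.add_apply, Finsupp.single_eq_same,
      Finsupp.single_eq_of_ne' hg, add_zero]
  have hβg : β.coeff g = c := by
    rw [hβdef, MonoidAlgebra.coeff_add, MonoidAlgebra.coeff_single, MonoidAlgebra.coeff_single, Finsupp.add_apply, Finsupp.single_eq_same,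
      Finsupp.single_eq_of_ne' (Ne.symm hg), zero_add]
  have := hA α β hαβ 1 (Finsupp.mem_support_iff.mpr (by rw [hα1]; exact hu))
    g (Finsupp.mem_support_iff.mpr (by rw [hβg]; exact hc))
  rw [hα1, hβg, huc] at this
  exact hc this

/-- Every `M`-Armendariz ring with `|M| ≥ 2` is Abelian. -/
theorem stmt_5 (M R : Type*) [Monoid M] [Nontrivial M] [Ring R]
    (hA : ∀ α β : MonoidAlgebra R M, α * β = 0 →
      ∀ g ∈ α.coeff.support, ∀ h ∈ β.coeff.support, α.coeff g * β.coeff h = 0) :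
    ∀ f : R, IsIdempotentElem f → f ∈ Set.center R := by
  intro f hf
  have hff : f * f = f := hf
  have h1 : f * (1 - f) = 0 := by rw [mul_sub, mul_one, hff, sub_self]
  have h2 : (1 - f) * f = 0 := by rw [sub_mul, one_mul, hff, sub_self]
  have h3 : (1 - f) * (1 - f) = 1 - f := by
    rw [sub_mul, one_mul, mul_sub, mul_one, hff, sub_self, sub_zero]
  rw [Semigroup.mem_center_iff]
  intro a
  have hc : f * a * (1 - f) = 0 := by
    apply key_aux hA f (1 - f) _ h1
    · rw [← mul_assoc, ← mul_assoc, hff]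
    · rw [mul_assoc, h3]
    · have : f * a * (1 - f) * (f * a * (1 - f)) =
        f * (a * ((1 - f) * f * (a * (1 - f)))) := by simp only [mul_assoc]
      rw [this, h2, zero_mul, mul_zero, mul_zero]
  have hd : (1 - f) * a * f = 0 := by
    apply key_aux hA (1 - f) f _ h2
    · rw [← mul_assoc, ← mul_assoc, h3]
    · rw [mul_assoc, hff]
    · have : (1 - f) * a * f * ((1 - f) * a * f) =
        (1 - f) * (a * (f * (1 - f) * (a * f))) := by simp only [mul_assoc]
      rw [this, h1, zero_mul, mul_zero, mul_zero]
  have e1 : f * a = f * a * f := by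
    have := hc
    rw [mul_sub, mul_one, sub_eq_zero] at this
    exact this
  have e2 : a * f = f * a * f := by
    have := hd
    rw [sub_mul, one_mul, sub_mul, sub_eq_zero] at this
    rw [this, mul_assoc]
  exact e2.trans e1.symm
end

section
/- Let R be a right p.p.-ring and M a strictly totally ordered monoid (a monoid equipped with a total order such that g < g' implies gh < g'h and hg < hg' for all g, g', h ∈ M). If R is M-central Armendariz, then R is M-Armendariz. -/
set_option linter.unusedSectionVars false

section StmtAux

variable {M R : Type*} [Monoid M] [LinearOrder M] [Ring R]

private lemma aux_le_right (hstrict₁ : ∀ g g' h : M, g < g' → g * h < g' * h)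
    {g g' : M} (h : M) (hle : g ≤ g') : g * h ≤ g' * h := by
  rcases lt_or_eq_of_le hle with h1 | h1
  · exact (hstrict₁ _ _ _ h1).le
  · rw [h1]

private lemma aux_le_left (hstrict₂ : ∀ g g' h : M, g < g' → h * g < h * g')
    {g g' : M} (h : M) (hle : g ≤ g') : h * g ≤ h * g' := by
  rcases lt_or_eq_of_le hle with h1 | h1
  · exact (hstrict₂ _ _ _ h1).le
  · rw [h1]

private lemma aux_cancel_left (hstrict₂ : ∀ g g' h : M, g < g' → h * g < h * g')
    {g h h' : M} (H : g * h = g * h') : h = h' := by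
  rcases lt_trichotomy h h' with h1 | h1 | h1
  · exact absurd H (hstrict₂ _ _ g h1).ne
  · exact h1
  · exact absurd H.symm (hstrict₂ _ _ g h1).ne

/-- Product of the minimal coefficients vanishes. -/
private lemma aux_min_coeff
    (hstrict₁ : ∀ g g' h : M, g < g' → g * h < g' * h)
    (hstrict₂ : ∀ g g' h : M, g < g' → h * g < h * g')
    {α β : MonoidAlgebra R M} (hαβ : α * β = 0)
    {g₀ h₀ : M} (hg₀ : g₀ ∈ α.coeff.support) (hh₀ : h₀ ∈ β.coeff.support)
    (hming : ∀ g ∈ α.coeff.support, g₀ ≤ g) (hminh : ∀ h ∈ β.coeff.support, h₀ ≤ h) :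
    α.coeff g₀ * β.coeff h₀ = 0 := by
  have h1 : (α * β).coeff (g₀ * h₀) = 0 := by rw [hαβ]; rfl
  rw [MonoidAlgebra.mul_apply] at h1
  simp only [Finsupp.sum] at h1
  rw [Finset.sum_eq_single g₀ (fun g hg hne => ?_) (fun hmem => absurd hg₀ hmem)] at h1
  · rw [Finset.sum_eq_single h₀ (fun h hh hne => ?_) (fun hmem => absurd hh₀ hmem)] at h1
    · simpa using h1
    · have hlt : g₀ * h₀ < g₀ * h :=
        hstrict₂ _ _ _ (lt_of_le_of_ne (hminh h hh) (Ne.symm hne))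
      rw [if_neg hlt.ne']
  · apply Finset.sum_eq_zero
    intro h hh
    have hlt : g₀ * h₀ < g * h :=
      lt_of_le_of_lt (aux_le_left hstrict₂ g₀ (hminh h hh))
        (hstrict₁ _ _ _ (lt_of_le_of_ne (hming g hg) (Ne.symm hne)))
    rw [if_neg hlt.ne']

/-- In an `M`-central Armendariz ring with `M` nontrivial, `e*r*(1-e) = 0`
for every idempotent `e`. -/
private lemma aux_central
    (hCA : ∀ α β : MonoidAlgebra R M, α * β = 0 →
      ∀ g ∈ α.coeff.support, ∀ h ∈ β.coeff.support, α.coeff g * β.coeff h ∈ Set.center R)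
    (k : M) (hk : k ≠ 1) (e : R) (he : e * e = e) (r : R) :
    e * r * (1 - e) = 0 := by
  set a := e * r * (1 - e) with ha
  have hfe : (1 - e) * e = 0 := by rw [sub_mul, one_mul, he, sub_self]
  have hef : e * (1 - e) = 0 := by rw [mul_sub, mul_one, he, sub_self]
  have hff : (1 - e) * (1 - e) = 1 - e := by rw [mul_sub, mul_one, hfe, sub_zero]
  have hea : e * a = a := by rw [ha]; simp only [← mul_assoc]; rw [he]
  have hae : a * e = 0 := by rw [ha, mul_assoc, hfe, mul_zero]
  have hfa : (1 - e) * a = 0 := by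
    rw [ha]; simp only [← mul_assoc]; rw [hfe, zero_mul, zero_mul]
  have haf : a * (1 - e) = a := by
    nth_rewrite 1 [ha]
    rw [mul_assoc, hff, ← ha]
  have haa : a * a = 0 := by nth_rewrite 1 [ha]; rw [mul_assoc, hfa, mul_zero]
  by_cases ha0 : a = 0
  · exact ha0
  have he0 : e ≠ 0 := by
    intro h0
    apply ha0
    rw [ha, h0, zero_mul, zero_mul]
  set α : MonoidAlgebra R M := MonoidAlgebra.single 1 e - MonoidAlgebra.single k a with hα
  set β : MonoidAlgebra R M := MonoidAlgebra.single 1 (1 - e) + MonoidAlgebra.single k a with hβ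
  have hmul : α * β = 0 := by
    rw [hα, hβ, sub_mul, mul_add, mul_add]
    simp only [MonoidAlgebra.single_mul_single, one_mul, mul_one]
    rw [hef, hea, haf, haa]
    simp
  have hα1 : α.coeff 1 = e := by
    rw [hα]
    rw [MonoidAlgebra.coeff_sub, MonoidAlgebra.coeff_single, MonoidAlgebra.coeff_single, Finsupp.sub_apply, Finsupp.single_eq_same, Finsupp.single_eq_of_ne' hk, sub_zero]
  have hβk : β.coeff k = a := by
    rw [hβ]
    rw [MonoidAlgebra.coeff_add, MonoidAlgebra.coeff_single, MonoidAlgebra.coeff_single, Finsupp.add_apply, Finsupp.single_eq_same, Finsupp.single_eq_of_ne' (Ne.symm hk), zero_add]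
  have h1s : (1 : M) ∈ α.coeff.support := by rw [Finsupp.mem_support_iff, hα1]; exact he0
  have hks : k ∈ β.coeff.support := by rw [Finsupp.mem_support_iff, hβk]; exact ha0
  have hcen : a ∈ Set.center R := by
    have := hCA α β hmul 1 h1s k hks
    rwa [hα1, hβk, hea] at this
  have hcomm := Semigroup.mem_center_iff.mp hcen
  exact absurd (by rw [← hea, hcomm e, hae]) ha0

end StmtAux

/-- If `R` is a right p.p.-ring and `M` a strictly totally ordered monoid, then
`R` `M`-central Armendariz implies `R` `M`-Armendariz. -/
theorem stmt_6 (M R : Type*) [Monoid M] [LinearOrder M] [Ring R]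
    (hstrict₁ : ∀ g g' h : M, g < g' → g * h < g' * h)
    (hstrict₂ : ∀ g g' h : M, g < g' → h * g < h * g')
    (hpp : ∀ a : R, ∃ e : R, IsIdempotentElem e ∧
      ∀ x : R, a * x = 0 ↔ ∃ r : R, x = e * r)
    (hCA : ∀ α β : MonoidAlgebra R M, α * β = 0 →
      ∀ g ∈ α.coeff.support, ∀ h ∈ β.coeff.support, α.coeff g * β.coeff h ∈ Set.center R) :
    ∀ α β : MonoidAlgebra R M, α * β = 0 →
      ∀ g ∈ α.coeff.support, ∀ h ∈ β.coeff.support, α.coeff g * β.coeff h = 0 := by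
  by_cases hM : ∃ k : M, k ≠ 1
  case neg =>
    push_neg at hM
    intro α β hαβ g hg h hh
    exact aux_min_coeff hstrict₁ hstrict₂ hαβ hg hh
      (fun g' hg' => by rw [hM g', hM g]) (fun h' hh' => by rw [hM h', hM h])
  case pos =>
    obtain ⟨k, hk⟩ := hM
    -- R is abelian
    have habel : ∀ e : R, e * e = e → ∀ r : R, e * r = r * e := by
      intro e he r
      have h1 := aux_central hCA k hk e he r
      have hf : (1 - e) * (1 - e) = 1 - e := by
        have hfe : (1 - e) * e = 0 := by rw [sub_mul, one_mul, he, sub_self]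
        rw [mul_sub, mul_one, hfe, sub_zero]
      have h2 := aux_central hCA k hk (1 - e) hf r
      rw [sub_sub_cancel] at h2
      have h1' : e * r = e * r * e := by
        rw [mul_sub, mul_one] at h1; exact (sub_eq_zero.mp h1)
      have h2' : r * e = e * r * e := by
        rw [sub_mul, one_mul, sub_mul] at h2
        exact (sub_eq_zero.mp h2)
      rw [h1', h2']
    -- R is reduced
    have hred : ∀ x : R, x * x = 0 → x = 0 := by
      intro x hx
      obtain ⟨e, he, hann⟩ := hpp x
      obtain ⟨r, hr⟩ := (hann x).mp hx
      have hex : e * x = x := by rw [hr, ← mul_assoc, he.eq]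
      have hxe : x * e = 0 := (hann e).mpr ⟨e, he.eq.symm⟩
      rw [← hex, habel e he.eq x, hxe]
    have hanti : ∀ x y : R, x * y = 0 → y * x = 0 := by
      intro x y hxy
      apply hred
      calc y * x * (y * x) = y * (x * y) * x := by simp only [mul_assoc]
        _ = 0 := by rw [hxy, mul_zero, zero_mul]
    -- main induction on the size of the support of α
    suffices H : ∀ n : ℕ, ∀ α β : MonoidAlgebra R M, α.coeff.support.card ≤ n → α * β = 0 →
        ∀ g ∈ α.coeff.support, ∀ h ∈ β.coeff.support, α.coeff g * β.coeff h = 0 by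
      intro α β hαβ
      exact H α.coeff.support.card α β le_rfl hαβ
    intro n
    induction n with
    | zero =>
      intro α β hcard hαβ g hg h hh
      rw [Finset.card_eq_zero.mp (Nat.le_zero.mp hcard)] at hg
      exact absurd hg (Finset.notMem_empty g)
    | succ n ih =>
      intro α β hcard hαβ g hg h hh
      have hne : α.coeff.support.Nonempty := ⟨g, hg⟩
      set g₀ := α.coeff.support.min' hne with hg₀def
      have hg₀ : g₀ ∈ α.coeff.support := Finset.min'_mem _ _
      have hmin : ∀ g' ∈ α.coeff.support, g₀ ≤ g' := fun g' h' => Finset.min'_le _ _ h'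
      set a₀ := α.coeff g₀ with ha₀
      -- key: a₀ kills every coefficient of β
      have key : ∀ h' ∈ β.coeff.support, a₀ * β.coeff h' = 0 := by
        suffices K : ∀ m : ℕ, ∀ h' ∈ β.coeff.support,
            (β.coeff.support.filter (fun x => x < h')).card ≤ m → a₀ * β.coeff h' = 0 by
          intro h' hh'
          exact K _ h' hh' le_rfl
        intro m
        induction m using Nat.strong_induction_on with
        | _ m ihm =>
          intro h' hh' hcm
          have IH : ∀ h'' ∈ β.coeff.support, h'' < h' → a₀ * β.coeff h'' = 0 := by
            intro h'' hh'' hlt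
            have hsub : β.coeff.support.filter (fun x => x < h'') ⊂
                β.coeff.support.filter (fun x => x < h') := by
              constructor
              · intro x hx
                rw [Finset.mem_filter] at hx ⊢
                exact ⟨hx.1, hx.2.trans hlt⟩
              · intro hcon
                have : h'' ∈ β.coeff.support.filter (fun x => x < h'') :=
                  hcon (Finset.mem_filter.mpr ⟨hh'', hlt⟩)
                rw [Finset.mem_filter] at this
                exact absurd this.2 (lt_irrefl _)
            have hc := Finset.card_lt_card hsub
            exact ihm _ (lt_of_lt_of_le hc hcm) h'' hh'' le_rfl
          have h1 : (α * β).coeff (g₀ * h') = 0 := by rw [hαβ]; rfl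
          rw [MonoidAlgebra.mul_apply] at h1
          simp only [Finsupp.sum] at h1
          have h2 : a₀ * (a₀ * β.coeff h') = 0 := by
            have expand : ∑ g' ∈ α.coeff.support, ∑ h'' ∈ β.coeff.support,
                a₀ * (if g' * h'' = g₀ * h' then α.coeff g' * β.coeff h'' else 0)
                = a₀ * (a₀ * β.coeff h') := by
              rw [Finset.sum_eq_single g₀ (fun g' hg' hne' => ?_)
                (fun hmem => absurd hg₀ hmem)]
              · rw [Finset.sum_eq_single h' (fun h'' hh'' hne'' => ?_)
                  (fun hmem => absurd hh' hmem)]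
                · rw [if_pos rfl]
                · rw [if_neg (fun hEq => hne'' (aux_cancel_left hstrict₂ hEq)), mul_zero]
              · apply Finset.sum_eq_zero
                intro h'' hh''
                by_cases hEq : g' * h'' = g₀ * h'
                · rw [if_pos hEq]
                  have hgt : g₀ < g' := lt_of_le_of_ne (hmin g' hg') (Ne.symm hne')
                  have hlt : h'' < h' := by
                    by_contra hcon
                    push_neg at hcon
                    have : g₀ * h' < g' * h'' :=
                      lt_of_le_of_lt (aux_le_left hstrict₂ g₀ hcon)
                        (hstrict₁ _ _ _ hgt)
                    exact absurd hEq this.ne'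
                  have hzero : β.coeff h'' * a₀ = 0 := hanti _ _ (IH h'' hh'' hlt)
                  have hcen := Semigroup.mem_center_iff.mp
                    (hCA α β hαβ g' hg' h'' hh'')
                  rw [hcen a₀, mul_assoc, hzero, mul_zero]
                · rw [if_neg hEq, mul_zero]
            rw [← expand]
            simp only [← Finset.mul_sum]
            rw [h1, mul_zero]
          apply hred
          have hcomm := Semigroup.mem_center_iff.mp (hCA α β hαβ g₀ hg₀ h' hh')
          rw [show a₀ * β.coeff h' * (a₀ * β.coeff h') = a₀ * β.coeff h' * a₀ * β.coeff h' from
            (mul_assoc _ _ _).symm, ← hcomm a₀, h2, zero_mul]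
      by_cases hgg : g = g₀
      · rw [hgg]; exact key h hh
      · set α' : MonoidAlgebra R M := MonoidAlgebra.erase g₀ α with hα'
        have hsingle : (MonoidAlgebra.single g₀ a₀ : MonoidAlgebra R M) * β = 0 := by
          rw [← MonoidAlgebra.coeff_inj]
          refine Finsupp.ext fun x => ?_
          rw [MonoidAlgebra.mul_apply]
          rw [MonoidAlgebra.coeff_single, Finsupp.sum_single_index (by simp)]
          rw [Finsupp.sum]
          rw [Finset.sum_eq_zero (fun h'' hh'' => ?_)]
          · rfl
          · rw [key h'' hh'']
            exact ite_self 0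
        have hα'β : α' * β = 0 := by
          have hdec : MonoidAlgebra.single g₀ a₀ + α' = α := MonoidAlgebra.single_add_erase g₀ α
          rw [← hdec, add_mul, hsingle, zero_add] at hαβ
          exact hαβ
        have hcard' : α'.coeff.support.card ≤ n := by
          rw [hα', MonoidAlgebra.coeff_erase, Finsupp.support_erase]
          have := Finset.card_erase_of_mem hg₀
          omega
        have hg' : g ∈ α'.coeff.support := by
          rw [hα', MonoidAlgebra.coeff_erase, Finsupp.support_erase]
          exact Finset.mem_erase.mpr ⟨hgg, hg⟩
        have := ih α' β hcard' hα'β g hg' h hh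
        rwa [hα', MonoidAlgebra.coeff_erase, Finsupp.erase_ne hgg] at this
end

section
/- Let M be a strictly totally ordered monoid (a monoid with a total order such that g < g' implies gh < g'h and hg < hg' for all g, g', h ∈ M), R a ring, and I a two-sided ideal of R. Suppose I is reduced as a (non-unital) ring, i.e., for all a ∈ I, a² = 0 implies a = 0. If the quotient ring R/I is M-central Armendariz, then R is M-central Armendariz. -/
open Finsupp

/-- Key lemma: if `α * β = 0` over a strictly totally ordered monoid and `I` is a reduced
two-sided ideal, then `β.coeff h * x * α.coeff g = 0` for all support elements and all `x ∈ I`. -/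
theorem armendariz_key_aux {M R : Type*} [Monoid M] [LinearOrder M] [Ring R]
    (hstrict₁ : ∀ g g' h : M, g < g' → g * h < g' * h)
    (hstrict₂ : ∀ g g' h : M, g < g' → h * g < h * g')
    (I : TwoSidedIdeal R)
    (hred : ∀ a : R, a ∈ I → a ^ 2 = 0 → a = 0)
    (α β : MonoidAlgebra R M) (hmul : α * β = 0) :
    ∀ g ∈ α.coeff.support, ∀ h ∈ β.coeff.support, ∀ x ∈ I, β.coeff h * x * α.coeff g = 0 := by
  classical
  suffices H : ∀ n : ℕ, ∀ g ∈ α.coeff.support, ∀ h ∈ β.coeff.support,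
      ((α.coeff.support ×ˢ β.coeff.support).filter fun p => p.1 * p.2 < g * h).card = n →
      ∀ x ∈ I, β.coeff h * x * α.coeff g = 0 by
    exact fun g hg h hh => H _ g hg h hh rfl
  intro n
  induction n using Nat.strong_induction_on with
  | _ n IH =>
    intro g hg h hh hcard x hx
    have IH' : ∀ g' ∈ α.coeff.support, ∀ h' ∈ β.coeff.support, g' * h' < g * h →
        ∀ y ∈ I, β.coeff h' * y * α.coeff g' = 0 := by
      intro g' hg' h' hh' hlt y hy
      refine IH _ ?_ g' hg' h' hh' rfl y hy
      rw [← hcard]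
      apply Finset.card_lt_card
      have hsub : ((α.coeff.support ×ˢ β.coeff.support).filter fun p => p.1 * p.2 < g' * h') ⊆
          ((α.coeff.support ×ˢ β.coeff.support).filter fun p => p.1 * p.2 < g * h) := by
        intro p hp
        simp only [Finset.mem_filter] at hp ⊢
        exact ⟨hp.1, lt_trans hp.2 hlt⟩
      refine (Finset.ssubset_iff_of_subset hsub).mpr ⟨(g', h'), ?_, ?_⟩
      · simp only [Finset.mem_filter, Finset.mem_product]
        exact ⟨⟨hg', hh'⟩, hlt⟩
      · simp only [Finset.mem_filter, Finset.mem_product]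
        exact fun h => absurd h.2 (lt_irrefl _)
    have h0 : ∑ p ∈ (α.coeff.support ×ˢ β.coeff.support).filter (fun p => p.1 * p.2 = g * h),
        α.coeff p.1 * β.coeff p.2 = 0 := by
      have h1 := MonoidAlgebra.coeff_mul α β (g * h)
      rw [hmul] at h1
      rw [Finset.sum_filter, Finset.sum_product]
      simpa [Finsupp.sum] using h1.symm
    have htI : β.coeff h * x * α.coeff g ∈ I := I.mul_mem_right _ _ (I.mul_mem_left _ _ hx)
    apply hred _ htI
    rw [pow_two]
    have h2 : ∑ p ∈ (α.coeff.support ×ˢ β.coeff.support).filter (fun p => p.1 * p.2 = g * h),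
        (β.coeff h * x * α.coeff p.1) * (β.coeff p.2 * x * α.coeff g) = (β.coeff h * x * α.coeff g) * (β.coeff h * x * α.coeff g) := by
      apply Finset.sum_eq_single_of_mem (g, h)
      · simp only [Finset.mem_filter, Finset.mem_product]
        refine ⟨⟨hg, hh⟩, by simp⟩

      · intro p hp hne
        simp only [Finset.mem_filter, Finset.mem_product] at hp
        obtain ⟨⟨hp1, hp2⟩, hpm⟩ := hp
        rcases lt_trichotomy p.1 g with hlt | heq | hgt
        · have hz : β.coeff h * x * α.coeff p.1 = 0 :=
            IH' p.1 hp1 h hh (hstrict₁ _ _ _ hlt) x hx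
          rw [hz, zero_mul]
        · exfalso
          apply hne
          have h22 : p.2 = h := by
            rcases lt_trichotomy p.2 h with hlt2 | heq2 | hgt2
            · exact absurd hpm (by rw [heq]; exact ne_of_lt (hstrict₂ _ _ _ hlt2))
            · exact heq2
            · exact absurd hpm (by rw [heq]; exact ne_of_gt (hstrict₂ _ _ _ hgt2))
          exact Prod.ext heq h22
        · have h2lt : p.2 < h := by
            rcases lt_trichotomy p.2 h with hlt2 | heq2 | hgt2
            · exact hlt2
            · exfalso
              rw [heq2] at hpm
              exact absurd hpm (ne_of_gt (hstrict₁ _ _ _ hgt))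
            · exfalso
              have hgt' : g * h < p.1 * p.2 :=
                lt_trans (hstrict₂ _ _ _ hgt2) (hstrict₁ _ _ _ hgt)
              exact absurd hpm (ne_of_gt hgt')
          have hz : β.coeff p.2 * x * α.coeff g = 0 :=
            IH' g hg p.2 hp2 (hstrict₂ _ _ _ h2lt) x hx
          rw [hz, mul_zero]
    rw [← h2]
    calc ∑ p ∈ (α.coeff.support ×ˢ β.coeff.support).filter (fun p => p.1 * p.2 = g * h),
          (β.coeff h * x * α.coeff p.1) * (β.coeff p.2 * x * α.coeff g)
        = (β.coeff h * x) * ((∑ p ∈ (α.coeff.support ×ˢ β.coeff.support).filter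
            (fun p => p.1 * p.2 = g * h), α.coeff p.1 * β.coeff p.2) * (x * α.coeff g)) := by
          rw [Finset.sum_mul, Finset.mul_sum]
          apply Finset.sum_congr rfl
          intro p _
          noncomm_ring
      _ = 0 := by rw [h0, zero_mul, mul_zero]

/-- Let `M` be a strictly totally ordered monoid and `I` a two-sided ideal of `R` which is
reduced as a non-unital ring. If `R/I` is `M`-central Armendariz, then so is `R`. -/
theorem stmt_7 (M R : Type*) [Monoid M] [LinearOrder M] [Ring R]
    (hstrict₁ : ∀ g g' h : M, g < g' → g * h < g' * h)
    (hstrict₂ : ∀ g g' h : M, g < g' → h * g < h * g')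
    (I : TwoSidedIdeal R)
    (hred : ∀ a : R, a ∈ I → a ^ 2 = 0 → a = 0)
    (hQ : ∀ α β : MonoidAlgebra I.ringCon.Quotient M, α * β = 0 →
      ∀ g ∈ α.coeff.support, ∀ h ∈ β.coeff.support, α.coeff g * β.coeff h ∈ Set.center I.ringCon.Quotient) :
    ∀ α β : MonoidAlgebra R M, α * β = 0 →
      ∀ g ∈ α.coeff.support, ∀ h ∈ β.coeff.support, α.coeff g * β.coeff h ∈ Set.center R := by
  classical
  intro α β hmul g hg h hh
  have key := armendariz_key_aux hstrict₁ hstrict₂ I hred α β hmul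
  rw [Semigroup.mem_center_iff]
  intro r
  set π : R →+* I.ringCon.Quotient := RingCon.mk' I.ringCon with hπdef
  have hcomm : ∀ (x : R) (y : M),
      Commute ((MonoidAlgebra.singleOneRingHom.comp π) x)
        (MonoidAlgebra.of I.ringCon.Quotient M y) := by
    intro x y
    show _ * _ = _ * _
    show MonoidAlgebra.single (1 : M) (π x) * MonoidAlgebra.single y (1 : I.ringCon.Quotient)
      = MonoidAlgebra.single y (1 : I.ringCon.Quotient) * MonoidAlgebra.single (1 : M) (π x)
    simp only [MonoidAlgebra.single_mul_single, one_mul, mul_one]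
  set Φ := MonoidAlgebra.liftNCRingHom (k := R) (G := M) (R := MonoidAlgebra I.ringCon.Quotient M)
    (MonoidAlgebra.singleOneRingHom.comp π)
    (MonoidAlgebra.of I.ringCon.Quotient M) hcomm with hΦdef
  have hΦ : ∀ (γ : MonoidAlgebra R M) (m : M), (Φ γ).coeff m = π (γ.coeff m) := by
    intro γ
    induction γ using MonoidAlgebra.induction_linear with
    | zero => intro m; simp
    | add f g hf hg =>
      intro m
      rw [map_add]
      show (Φ f).coeff m + (Φ g).coeff m = π (f.coeff m + g.coeff m)
      rw [map_add, hf m, hg m]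
    | single a b =>
      intro m
      have hs : Φ (MonoidAlgebra.single a b) = MonoidAlgebra.single a (π b) := by
        rw [hΦdef, MonoidAlgebra.liftNCRingHom_single]
        show MonoidAlgebra.single (1 : M) (π b) * MonoidAlgebra.single a (1 : I.ringCon.Quotient)
          = _
        simp only [MonoidAlgebra.single_mul_single, one_mul, mul_one]
      rw [hs]
      rw [MonoidAlgebra.coeff_single, MonoidAlgebra.coeff_single, Finsupp.single_apply,
        Finsupp.single_apply, apply_ite π, map_zero]
  have hmulQ : Φ α * Φ β = 0 := by rw [← map_mul, hmul, map_zero]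
  have hcent : ∀ q : I.ringCon.Quotient,
      q * (π (α.coeff g) * π (β.coeff h)) = (π (α.coeff g) * π (β.coeff h)) * q := by
    by_cases h1 : π (α.coeff g) = 0
    · intro q; rw [h1, zero_mul, mul_zero, zero_mul]
    · by_cases h2 : π (β.coeff h) = 0
      · intro q; rw [h2, mul_zero, mul_zero, zero_mul]
      · have hg' : g ∈ (Φ α).coeff.support := by
          rw [Finsupp.mem_support_iff, hΦ]; exact h1
        have hh' : h ∈ (Φ β).coeff.support := by
          rw [Finsupp.mem_support_iff, hΦ]; exact h2
        have hc := hQ (Φ α) (Φ β) hmulQ g hg' h hh'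
        rw [hΦ, hΦ] at hc
        exact fun q => Semigroup.mem_center_iff.mp hc q
  have hdI : α.coeff g * β.coeff h * r - r * (α.coeff g * β.coeff h) ∈ I := by
    have h0 : π (α.coeff g * β.coeff h * r - r * (α.coeff g * β.coeff h)) = 0 := by
      rw [map_sub, map_mul, map_mul, map_mul, map_mul, hcent (π r), sub_self]
    have h0' : ((α.coeff g * β.coeff h * r - r * (α.coeff g * β.coeff h) : R) : I.ringCon.Quotient)
        = ((0 : R) : I.ringCon.Quotient) := h0
    rw [TwoSidedIdeal.mem_iff]
    exact (RingCon.eq I.ringCon).mp h0'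
  set c := α.coeff g * β.coeff h with hc
  set d := c * r - r * c with hd
  have h1 : β.coeff h * d * α.coeff g = 0 := key g hg h hh d hdI
  have hcdc : c * d * c = 0 := by
    have he : c * d * c = α.coeff g * (β.coeff h * d * α.coeff g) * β.coeff h := by
      rw [hc]; noncomm_ring
    rw [he, h1, mul_zero, zero_mul]
  have hcd : c * d = 0 := by
    refine hred _ (I.mul_mem_left _ _ hdI) ?_
    rw [pow_two]
    calc c * d * (c * d) = (c * d * c) * d := by noncomm_ring
      _ = 0 := by rw [hcdc, zero_mul]
  have hdc : d * c = 0 := by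
    refine hred _ (I.mul_mem_right _ _ hdI) ?_
    rw [pow_two]
    calc d * c * (d * c) = d * (c * d * c) := by noncomm_ring
      _ = 0 := by rw [hcdc, mul_zero]
  have hd3 : d * (d * d) = 0 := by
    have hdd : d * d = c * (r * d) := by
      calc d * d = (c * r - r * c) * d := by rw [← hd]
        _ = c * (r * d) - r * (c * d) := by noncomm_ring
        _ = c * (r * d) := by rw [hcd, mul_zero, sub_zero]
    rw [hdd]
    calc d * (c * (r * d)) = (d * c) * (r * d) := by noncomm_ring
      _ = 0 := by rw [hdc, zero_mul]
  have hdd0 : d * d = 0 := by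
    refine hred _ (I.mul_mem_left _ _ hdI) ?_
    rw [pow_two]
    calc (d * d) * (d * d) = (d * (d * d)) * d := by noncomm_ring
      _ = 0 := by rw [hd3, zero_mul]
  have hd0 : d = 0 := hred _ hdI (by rw [pow_two]; exact hdd0)
  have hcr : c * r = r * c := by
    have := sub_eq_zero.mp hd0
    exact this
  exact hcr.symm
end

section
/- Let M be a commutative, cancellative, torsion-free monoid (torsion-free means: if g, h ∈ M and k ≥ 1 satisfy g^k = h^k, then g = h). Let R be a ring and I a two-sided ideal of R that is reduced as a (non-unital) ring, i.e., for all a ∈ I, a² = 0 implies a = 0. If R/I is M-central Armendariz, then R is M-central Armendariz. -/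
/-!
Auxiliary development for `stmt_8`.
-/

section Order

variable {M : Type*} [CommMonoid M]

/-- From cancellativity and torsion-freeness, build a translation-invariant linear order
(as a relation) on `M`, via Zorn's lemma applied to "cone" relations. -/
private lemma exists_cone
    (hcancel : ∀ m g h : M, m * g = m * h → g = h)
    (htf : ∀ (g h : M) (k : ℕ), 1 ≤ k → g ^ k = h ^ k → g = h) :
    ∃ r : Set (M × M),
      (∀ a, (a, a) ∈ r) ∧
      (∀ a b c, (a, b) ∈ r → (b, c) ∈ r → (a, c) ∈ r) ∧
      (∀ c a b, (a, b) ∈ r ↔ (c * a, c * b) ∈ r) ∧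
      (∀ a b, (a, b) ∈ r → (b, a) ∈ r → a = b) ∧
      (∀ a b, (a, b) ∈ r ∨ (b, a) ∈ r) := by
  classical
  set Cone : Set (M × M) → Prop := fun r =>
    (∀ a, (a, a) ∈ r) ∧
    (∀ a b c, (a, b) ∈ r → (b, c) ∈ r → (a, c) ∈ r) ∧
    (∀ c a b, (a, b) ∈ r ↔ (c * a, c * b) ∈ r) ∧
    (∀ a b, (a, b) ∈ r → (b, a) ∈ r → a = b) with hCone
  have hdiag : Cone {p : M × M | p.1 = p.2} := by
    refine ⟨fun a => rfl, fun a b c hab hbc => hab.trans hbc, fun c a b => ?_,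
      fun a b hab _ => hab⟩
    constructor
    · intro h; simp only [Set.mem_setOf_eq] at *; rw [h]
    · intro h; simp only [Set.mem_setOf_eq] at *; exact hcancel c a b h
  have hchain_ub : ∀ c ⊆ {r | Cone r}, IsChain (· ⊆ ·) c → c.Nonempty →
      ∃ ub ∈ {r | Cone r}, ∀ s ∈ c, s ⊆ ub := by
    intro c hcS hchain hne
    refine ⟨⋃₀ c, ⟨?_, ?_, ?_, ?_⟩, fun s hs => Set.subset_sUnion_of_mem hs⟩
    · intro a
      obtain ⟨r₀, hr₀⟩ := hne
      exact ⟨r₀, hr₀, (hcS hr₀).1 a⟩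
    · rintro a b d ⟨r₁, h1, hab⟩ ⟨r₂, h2, hbd⟩
      rcases hchain.total h1 h2 with h12 | h21
      · exact ⟨r₂, h2, (hcS h2).2.1 a b d (h12 hab) hbd⟩
      · exact ⟨r₁, h1, (hcS h1).2.1 a b d hab (h21 hbd)⟩
    · intro e a b
      constructor
      · rintro ⟨r₁, h1, hab⟩; exact ⟨r₁, h1, ((hcS h1).2.2.1 e a b).mp hab⟩
      · rintro ⟨r₁, h1, hab⟩; exact ⟨r₁, h1, ((hcS h1).2.2.1 e a b).mpr hab⟩
    · rintro a b ⟨r₁, h1, hab⟩ ⟨r₂, h2, hba⟩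
      rcases hchain.total h1 h2 with h12 | h21
      · exact (hcS h2).2.2.2 a b (h12 hab) hba
      · exact (hcS h1).2.2.2 a b hab (h21 hba)
  obtain ⟨r, hr_sub, hr_max⟩ := zorn_subset_nonempty {r | Cone r} hchain_ub _ hdiag
  obtain ⟨hrefl, htrans, hcompat, hanti⟩ := hr_max.prop
  refine ⟨r, hrefl, htrans, hcompat, hanti, ?_⟩
  -- totality
  by_contra hnt
  push_neg at hnt
  obtain ⟨x, y, hxy, hyx⟩ := hnt
  have hxny : x ≠ y := fun h => hxy (h ▸ hrefl x)
  -- powers stay in r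
  have hpow : ∀ u v : M, (u, v) ∈ r → ∀ i : ℕ, (u ^ (i + 1), v ^ (i + 1)) ∈ r := by
    intro u v huv i
    induction i with
    | zero => simpa [pow_one] using huv
    | succ i ih =>
      have h1 : (u ^ (i + 1) * u, v ^ (i + 1) * u) ∈ r := by
        have := (hcompat u _ _).mp ih
        simpa [mul_comm] using this
      have h2 : (v ^ (i + 1) * u, v ^ (i + 1) * v) ∈ r := (hcompat (v ^ (i + 1)) u v).mp huv
      have := htrans _ _ _ h1 h2
      simpa [pow_succ] using this
  -- key: extending by a non-related pair yields a power relation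
  have key : ∀ a b : M, (a, b) ∉ r → ∃ N : ℕ, 1 ≤ N ∧ (b ^ N, a ^ N) ∈ r := by
    intro a b hab
    set e : Set (M × M) := {p : M × M | ∃ n : ℕ, (p.1 * b ^ n, p.2 * a ^ n) ∈ r} with he
    have hre : r ⊆ e := by
      intro p hp
      exact ⟨0, by simpa [pow_zero, mul_one] using hp⟩
    have habe : (a, b) ∈ e := by
      refine ⟨1, ?_⟩
      simp only [pow_one]
      have : a * b = b * a := mul_comm a b
      rw [this]
      exact hrefl (b * a)
    -- e satisfies the first three cone axioms
    have he_refl : ∀ u, (u, u) ∈ e := fun u => ⟨0, by simpa using hrefl u⟩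
    have he_trans : ∀ u v w, (u, v) ∈ e → (v, w) ∈ e → (u, w) ∈ e := by
      rintro u v w ⟨n, hn⟩ ⟨m, hm⟩
      refine ⟨n + m, ?_⟩
      have h1 : (b ^ m * (u * b ^ n), b ^ m * (v * a ^ n)) ∈ r := (hcompat _ _ _).mp hn
      have h2 : (a ^ n * (v * b ^ m), a ^ n * (w * a ^ m)) ∈ r := (hcompat _ _ _).mp hm
      have hmid : b ^ m * (v * a ^ n) = a ^ n * (v * b ^ m) := by ac_rfl
      rw [hmid] at h1
      have h3 := htrans _ _ _ h1 h2
      have hl : b ^ m * (u * b ^ n) = u * b ^ (n + m) := by rw [pow_add]; ac_rfl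
      have hr' : a ^ n * (w * a ^ m) = w * a ^ (n + m) := by rw [pow_add]; ac_rfl
      rw [hl, hr'] at h3
      exact h3
    have he_compat : ∀ d u v, ((u, v) ∈ e ↔ (d * u, d * v) ∈ e) := by
      intro d u v
      constructor
      · rintro ⟨n, hn⟩
        refine ⟨n, ?_⟩
        have := (hcompat d _ _).mp hn
        simpa [mul_assoc] using this
      · rintro ⟨n, hn⟩
        refine ⟨n, ?_⟩
        have : (d * (u * b ^ n), d * (v * a ^ n)) ∈ r := by simpa [mul_assoc] using hn
        exact (hcompat d _ _).mpr this
    -- e cannot be a cone (else maximality is contradicted), so antisymmetry fails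
    have hnotcone : ¬ Cone e := by
      intro hce
      have : e ⊆ r := hr_max.2 hce hre
      exact hab (this habe)
    rw [hCone] at hnotcone
    simp only [not_and] at hnotcone
    have hnanti := hnotcone he_refl he_trans he_compat
    push_neg at hnanti
    obtain ⟨u, v, huv, hvu, hune⟩ := hnanti
    obtain ⟨n, hn⟩ := huv
    obtain ⟨m, hm⟩ := hvu
    -- combine
    have h1 : (b ^ m * (u * b ^ n), b ^ m * (v * a ^ n)) ∈ r := (hcompat _ _ _).mp hn
    have h2 : (a ^ n * (v * b ^ m), a ^ n * (u * a ^ m)) ∈ r := (hcompat _ _ _).mp hm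
    have hmid : b ^ m * (v * a ^ n) = a ^ n * (v * b ^ m) := by ac_rfl
    rw [hmid] at h1
    have h3 := htrans _ _ _ h1 h2
    have hl : b ^ m * (u * b ^ n) = u * b ^ (n + m) := by rw [pow_add]; ac_rfl
    have hr' : a ^ n * (u * a ^ m) = u * a ^ (n + m) := by rw [pow_add]; ac_rfl
    rw [hl, hr'] at h3
    have h4 : (b ^ (n + m), a ^ (n + m)) ∈ r :=
      (hcompat u (b ^ (n + m)) (a ^ (n + m))).mpr h3
    refine ⟨n + m, ?_, h4⟩
    rcases Nat.eq_zero_or_pos (n + m) with h0 | h1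
    · exfalso
      have hn0 : n = 0 := by omega
      have hm0 : m = 0 := by omega
      rw [hn0] at hn; rw [hm0] at hm
      simp only [pow_zero, mul_one] at hn hm
      exact hune (hanti u v hn hm)
    · exact h1
  obtain ⟨N, hN1, hNr⟩ := key x y hxy
  obtain ⟨K, hK1, hKr⟩ := key y x hyx
  -- (y^N, x^N) ∈ r and (x^K, y^K) ∈ r; take powers
  obtain ⟨N', rfl⟩ : ∃ N', N = N' + 1 := ⟨N - 1, by omega⟩
  obtain ⟨K', rfl⟩ : ∃ K', K = K' + 1 := ⟨K - 1, by omega⟩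
  have hA : ((y ^ (N' + 1)) ^ (K' + 1), (x ^ (N' + 1)) ^ (K' + 1)) ∈ r := hpow _ _ hNr K'
  have hB : ((x ^ (K' + 1)) ^ (N' + 1), (y ^ (K' + 1)) ^ (N' + 1)) ∈ r := hpow _ _ hKr N'
  rw [← pow_mul, ← pow_mul] at hA hB
  rw [mul_comm (K' + 1) (N' + 1)] at hB
  have heq : y ^ ((N' + 1) * (K' + 1)) = x ^ ((N' + 1) * (K' + 1)) := hanti _ _ hA hB
  have : y = x := htf y x ((N' + 1) * (K' + 1))
    (Nat.mul_pos (Nat.succ_pos N') (Nat.succ_pos K')) heq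
  exact hxny this.symm

end Order

section Reduced

variable {R : Type*} [Ring R] (I : TwoSidedIdeal R)

private lemma red_opp (hred : ∀ a : R, a ∈ I → a ^ 2 = 0 → a = 0)
    {p q : R} (hp : p ∈ I) (hq : q ∈ I) (h : p * q = 0) : q * p = 0 := by
  apply hred _ (I.mul_mem_left q p hp)
  rw [pow_two]
  calc q * p * (q * p) = q * (p * q) * p := by simp only [mul_assoc]
  _ = 0 := by rw [h, mul_zero, zero_mul]

private lemma red_mid (hred : ∀ a : R, a ∈ I → a ^ 2 = 0 → a = 0)
    {p q : R} (z : R) (hp : p ∈ I) (hq : q ∈ I) (h : p * q = 0) : p * z * q = 0 := by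
  have hqp : q * p = 0 := red_opp I hred hp hq h
  apply hred _ (I.mul_mem_left _ _ hq)
  rw [pow_two]
  calc p * z * q * (p * z * q) = p * z * (q * p) * z * q := by simp only [mul_assoc]
  _ = 0 := by rw [hqp, mul_zero, zero_mul, zero_mul]

private lemma red_sq_right (hred : ∀ a : R, a ∈ I → a ^ 2 = 0 → a = 0)
    {p q : R} (hp : p ∈ I) (hq : q ∈ I) (h : p * q * q = 0) : p * q = 0 := by
  have htI : p * q ∈ I := I.mul_mem_left _ _ hq
  have hqt : q * (p * q) = 0 := red_opp I hred htI hq h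
  apply hred _ htI
  rw [pow_two]
  calc p * q * (p * q) = p * (q * (p * q)) := by simp only [mul_assoc]
  _ = 0 := by rw [hqt, mul_zero]

end Reduced

section Core

/-- Core lemma: if all coefficients of `α`, `β` lie in a reduced ideal `I` and `α * β = 0`,
then all coefficient products vanish. -/
private lemma core_vanish {M R : Type*} [CommMonoid M] [Ring R] [LinearOrder M]
    (hcancel : ∀ m g h : M, m * g = m * h → g = h)
    (hmono : ∀ a b c : M, a < b → a * c < b * c)
    (I : TwoSidedIdeal R) (hred : ∀ a : R, a ∈ I → a ^ 2 = 0 → a = 0)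
    (α β : MonoidAlgebra R M) (hα : ∀ g, α.coeff g ∈ I) (hβ : ∀ h, β.coeff h ∈ I)
    (hmul : α * β = 0) : ∀ g h : M, α.coeff g * β.coeff h = 0 := by
  classical
  set A := α.coeff.support with hA
  set B := β.coeff.support with hB
  set S : Finset M := (A ×ˢ B).image (fun p => p.1 * p.2) with hS
  have hco : ∀ m : M,
      (∑ g' ∈ A, ∑ h' ∈ B, if g' * h' = m then α.coeff g' * β.coeff h' else 0) = 0 := by
    intro m
    have h0 : (α * β).coeff m = 0 := by rw [hmul]; rfl
    rw [MonoidAlgebra.mul_apply] at h0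
    simpa [Finsupp.sum] using h0
  have main : ∀ n t : ℕ, ∀ g h : M,
      (S.filter (fun m' => m' < g * h)).card < n →
      (A.filter (fun g' => g < g' ∧ ∃ h' ∈ B, g' * h' = g * h)).card < t →
      α.coeff g * β.coeff h = 0 := by
    intro n
    induction n with
    | zero => intro t g h hn _; exact absurd hn (Nat.not_lt_zero _)
    | succ n ihn =>
      intro t
      induction t with
      | zero => intro g h _ ht; exact absurd ht (Nat.not_lt_zero _)
      | succ t iht =>
        intro g h hn ht
        by_cases hgA : g ∈ A
        swap
        · rw [hA] at hgA
          rw [Finsupp.notMem_support_iff.mp hgA, zero_mul]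
        by_cases hhB : h ∈ B
        swap
        · rw [hB] at hhB
          rw [Finsupp.notMem_support_iff.mp hhB, mul_zero]
        -- pairs with strictly smaller product vanish
        have houter : ∀ g' h', g' ∈ A → h' ∈ B → g' * h' < g * h → α.coeff g' * β.coeff h' = 0 := by
          intro g' h' hg' hh' hlt
          have hmemS : g' * h' ∈ S.filter (fun m' => m' < g * h) := by
            refine Finset.mem_filter.mpr ⟨?_, hlt⟩
            exact Finset.mem_image.mpr ⟨(g', h'), Finset.mem_product.mpr ⟨hg', hh'⟩, rfl⟩
          have hsub : S.filter (fun m' => m' < g' * h') ⊆ S.filter (fun m' => m' < g * h) := by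
            intro z hz
            rw [Finset.mem_filter] at hz ⊢
            exact ⟨hz.1, lt_trans hz.2 hlt⟩
          have hss : S.filter (fun m' => m' < g' * h') ⊂ S.filter (fun m' => m' < g * h) := by
            rw [Finset.ssubset_iff_of_subset hsub]
            exact ⟨g' * h', hmemS, by simp⟩
          have hcard : (S.filter (fun m' => m' < g' * h')).card < n :=
            lt_of_lt_of_le (Finset.card_lt_card hss) (Nat.lt_succ_iff.mp hn)
          exact ihn ((A.filter
            (fun g'' => g' < g'' ∧ ∃ h'' ∈ B, g'' * h'' = g' * h')).card + 1)
            g' h' hcard (Nat.lt_succ_self _)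
        -- pairs at the same level with strictly bigger first component vanish
        have hinner : ∀ g' h', g' ∈ A → h' ∈ B → g' * h' = g * h → g < g' →
            α.coeff g' * β.coeff h' = 0 := by
          intro g' h' hg' hh' he hgt
          apply iht g' h'
          · rw [he]; exact hn
          · have hsub : A.filter (fun g'' => g' < g'' ∧ ∃ h'' ∈ B, g'' * h'' = g' * h') ⊆
                A.filter (fun g'' => g < g'' ∧ ∃ h'' ∈ B, g'' * h'' = g * h) := by
              intro z hz
              rw [Finset.mem_filter] at hz ⊢
              refine ⟨hz.1, lt_trans hgt hz.2.1, ?_⟩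
              obtain ⟨h'', hh'', hzh⟩ := hz.2.2
              exact ⟨h'', hh'', by rw [hzh, he]⟩
            have hmem : g' ∈ A.filter (fun g'' => g < g'' ∧ ∃ h'' ∈ B, g'' * h'' = g * h) :=
              Finset.mem_filter.mpr ⟨hg', hgt, ⟨h', hh', he⟩⟩
            have hss : A.filter (fun g'' => g' < g'' ∧ ∃ h'' ∈ B, g'' * h'' = g' * h') ⊂
                A.filter (fun g'' => g < g'' ∧ ∃ h'' ∈ B, g'' * h'' = g * h) := by
              rw [Finset.ssubset_iff_of_subset hsub]
              exact ⟨g', hmem, by simp⟩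
            exact lt_of_lt_of_le (Finset.card_lt_card hss) (Nat.lt_succ_iff.mp ht)
        -- main computation
        have E2 : (∑ g' ∈ A, ∑ h' ∈ B, if g' * h' = g * h then α.coeff g' * β.coeff h' else 0) * β.coeff h = 0 := by
          rw [hco (g * h), zero_mul]
        rw [Finset.sum_mul] at E2
        rw [Finset.sum_eq_single_of_mem g hgA] at E2
        · rw [Finset.sum_mul, Finset.sum_eq_single_of_mem h hhB] at E2
          · rw [if_pos rfl] at E2
            exact red_sq_right I hred (hα g) (hβ h) E2
          · intro h' hh' hne
            rw [if_neg, zero_mul]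
            intro hcon
            exact hne (hcancel g h' h hcon)
        · intro g' hg' hne
          rw [Finset.sum_mul]
          apply Finset.sum_eq_zero
          intro h' hh'
          by_cases hif : g' * h' = g * h
          · rw [if_pos hif]
            rcases lt_or_gt_of_ne hne with hlt | hgt
            · have h1 : α.coeff g' * β.coeff h = 0 := houter g' h hg' hhB (hmono g' g h hlt)
              exact red_mid I hred (β.coeff h') (hα g') (hβ h) h1
            · rw [hinner g' h' hg' hh' hif hgt, zero_mul]
          · rw [if_neg hif, zero_mul]
  intro g h
  exact main (S.card + 1)
    ((A.filter (fun g' => g < g' ∧ ∃ h' ∈ B, g' * h' = g * h)).card + 1) g h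
    (Nat.lt_succ_of_le (Finset.card_filter_le _ _)) (Nat.lt_succ_self _)

end Core

/-- Let `M` be a commutative, cancellative, torsion-free monoid and `I` a two-sided ideal of `R`
which is reduced as a non-unital ring. If `R/I` is `M`-central Armendariz, then so is `R`. -/
theorem stmt_8 (M R : Type*) [CommMonoid M] [Ring R]
    (hcancel : ∀ m g h : M, m * g = m * h → g = h)
    (htf : ∀ (g h : M) (k : ℕ), 1 ≤ k → g ^ k = h ^ k → g = h)
    (I : TwoSidedIdeal R)
    (hred : ∀ a : R, a ∈ I → a ^ 2 = 0 → a = 0)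
    (hQ : ∀ α β : MonoidAlgebra I.ringCon.Quotient M, α * β = 0 →
      ∀ g ∈ α.coeff.support, ∀ h ∈ β.coeff.support, α.coeff g * β.coeff h ∈ Set.center I.ringCon.Quotient) :
    ∀ α β : MonoidAlgebra R M, α * β = 0 →
      ∀ g ∈ α.coeff.support, ∀ h ∈ β.coeff.support, α.coeff g * β.coeff h ∈ Set.center R := by
  classical
  intro α β hmul g _hg h _hh
  -- set up the linear order on M
  obtain ⟨r, hrefl, htrans, hcompat, hanti, htotal⟩ := exists_cone hcancel htf
  letI : LinearOrder M :=
    { le := fun a b => (a, b) ∈ r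
      le_refl := hrefl
      le_trans := htrans
      le_antisymm := hanti
      le_total := htotal
      toDecidableLE := fun a b => Classical.dec _ }
  have hle_iff : ∀ a b c : M, (a ≤ b ↔ c * a ≤ c * b) := fun a b c => hcompat c a b
  have hmono : ∀ a b c : M, a < b → a * c < b * c := by
    intro a b c hab
    rw [lt_iff_le_not_ge] at hab ⊢
    constructor
    · have := (hle_iff a b c).mp hab.1
      simpa [mul_comm] using this
    · intro hcon
      apply hab.2
      apply (hle_iff b a c).mpr
      simpa [mul_comm] using hcon
  -- key vanishing statement
  have key : ∀ x z : R, x ∈ I → z ∈ I → ∀ g' h' : M, x * (α.coeff g' * β.coeff h') * z = 0 := by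
    intro x z hx hz
    have h1 : (MonoidAlgebra.single (1 : M) x * α) * (β * MonoidAlgebra.single (1 : M) z)
        = 0 := by
      rw [mul_assoc, ← mul_assoc α β, hmul, zero_mul, mul_zero]
    have h2 := core_vanish hcancel hmono I hred _ _
      (fun g0 => by
        rw [MonoidAlgebra.single_one_mul_apply]
        exact I.mul_mem_right x (α.coeff g0) hx)
      (fun h0 => by
        rw [MonoidAlgebra.mul_single_one_apply]
        exact I.mul_mem_left (β.coeff h0) z hz)
      h1
    intro g' h'
    have h3 := h2 g' h'
    rw [MonoidAlgebra.single_one_mul_apply, MonoidAlgebra.mul_single_one_apply] at h3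
    calc x * (α.coeff g' * β.coeff h') * z = x * α.coeff g' * (β.coeff h' * z) := by simp only [mul_assoc]
    _ = 0 := h3
  set c := α.coeff g * β.coeff h with hc
  have hcz : ∀ z, z ∈ I → c * z = 0 := by
    intro z hz
    apply hred _ (I.mul_mem_left c z hz)
    rw [pow_two]
    have hz1 : z * (α.coeff g * β.coeff h) * z = 0 := key z z hz hz g h
    calc c * z * (c * z) = (α.coeff g * β.coeff h) * (z * (α.coeff g * β.coeff h) * z) := by
          rw [hc]; simp only [mul_assoc]
    _ = 0 := by rw [hz1, mul_zero]
  have hxc : ∀ x, x ∈ I → x * c = 0 := by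
    intro x hx
    apply hred _ (I.mul_mem_right x c hx)
    rw [pow_two]
    have hx1 : x * (α.coeff g * β.coeff h) * x = 0 := key x x hx hx g h
    calc x * c * (x * c) = (x * (α.coeff g * β.coeff h) * x) * c := by
          rw [hc]; simp only [mul_assoc]
    _ = 0 := by rw [hx1, zero_mul]
  -- commutators lie in I
  have hdI : ∀ s : R, c * s - s * c ∈ I := by
    intro s
    by_cases hgI : α.coeff g ∈ I
    · have hcI : c ∈ I := I.mul_mem_right (α.coeff g) (β.coeff h) hgI
      exact I.sub_mem (I.mul_mem_right c s hcI) (I.mul_mem_left s c hcI)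
    by_cases hhI : β.coeff h ∈ I
    · have hcI : c ∈ I := I.mul_mem_left (α.coeff g) (β.coeff h) hhI
      exact I.sub_mem (I.mul_mem_right c s hcI) (I.mul_mem_left s c hcI)
    -- use the quotient hypothesis
    set π : R →+* I.ringCon.Quotient := I.ringCon.mk' with hπdef
    have hπ0 : ∀ a : R, π a = 0 ↔ a ∈ I := by
      intro a
      rw [TwoSidedIdeal.mem_iff]
      show (a : I.ringCon.Quotient) = ((0 : R) : I.ringCon.Quotient) ↔ _
      exact I.ringCon.eq
    have hcomm0 : ∀ (x : R) (y : M),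
        Commute ((MonoidAlgebra.singleOneRingHom.comp π) x) (MonoidAlgebra.of _ M y) := by
      intro x y
      show MonoidAlgebra.single (1 : M) (π x) * MonoidAlgebra.single y (1 : I.ringCon.Quotient)
        = MonoidAlgebra.single y (1 : I.ringCon.Quotient) * MonoidAlgebra.single (1 : M) (π x)
      rw [MonoidAlgebra.single_mul_single, MonoidAlgebra.single_mul_single,
        one_mul, mul_one, one_mul, mul_one]
    set Qmap : MonoidAlgebra R M →+* MonoidAlgebra I.ringCon.Quotient M :=
      MonoidAlgebra.liftNCRingHom (MonoidAlgebra.singleOneRingHom.comp π)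
        (MonoidAlgebra.of _ M) hcomm0 with hQmapdef
    have hQmap_single : ∀ (g0 : M) (r0 : R),
        Qmap (MonoidAlgebra.single g0 r0) = MonoidAlgebra.single g0 (π r0) := by
      intro g0 r0
      have h1 : Qmap (MonoidAlgebra.single g0 r0)
          = (MonoidAlgebra.singleOneRingHom.comp π) r0 * (MonoidAlgebra.of _ M) g0 :=
        MonoidAlgebra.liftNC_single _ _ _ _
      rw [h1]
      show MonoidAlgebra.single (1 : M) (π r0) * MonoidAlgebra.single g0 1 = _
      rw [MonoidAlgebra.single_mul_single, one_mul, mul_one]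
    have hQmap_apply : ∀ (γ : MonoidAlgebra R M) (m : M), (Qmap γ).coeff m = π (γ.coeff m) := by
      intro γ
      induction γ using MonoidAlgebra.induction_linear with
      | zero => intro m; simp
      | add a b ha hb =>
        intro m
        have h2 : Qmap (a + b) = Qmap a + Qmap b := map_add _ _ _
        rw [h2, MonoidAlgebra.coeff_add, Finsupp.add_apply, ha, hb, MonoidAlgebra.coeff_add,
            Finsupp.add_apply, map_add]
      | single g0 r0 =>
        intro m
        rw [hQmap_single]
        simp only [MonoidAlgebra.coeff_single, Finsupp.single_apply, apply_ite π, map_zero]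
    have hmulQ : Qmap α * Qmap β = 0 := by rw [← map_mul, hmul, map_zero]
    have hgs : g ∈ (Qmap α).coeff.support := by
      rw [Finsupp.mem_support_iff, hQmap_apply]
      intro hcon
      exact hgI ((hπ0 (α.coeff g)).mp hcon)
    have hhs : h ∈ (Qmap β).coeff.support := by
      rw [Finsupp.mem_support_iff, hQmap_apply]
      intro hcon
      exact hhI ((hπ0 (β.coeff h)).mp hcon)
    have hcent := hQ (Qmap α) (Qmap β) hmulQ g hgs h hhs
    rw [Semigroup.mem_center_iff] at hcent
    have hcomm := hcent (π s)
    rw [hQmap_apply, hQmap_apply] at hcomm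
    apply (hπ0 _).mp
    simp only [hc, map_sub, map_mul]
    rw [sub_eq_zero]
    exact hcomm.symm
  -- finish: commutators square to zero
  rw [Semigroup.mem_center_iff]
  intro s
  have hd := hdI s
  have hsq : (c * s - s * c) * (c * s - s * c) = 0 := by
    have h1 : c * (s * (c * s - s * c)) = 0 := hcz _ (I.mul_mem_left s _ hd)
    have h2 : c * (c * s - s * c) = 0 := hcz _ hd
    calc (c * s - s * c) * (c * s - s * c)
        = c * (s * (c * s - s * c)) - s * (c * (c * s - s * c)) := by
          rw [sub_mul, mul_assoc c s (c * s - s * c), mul_assoc s c (c * s - s * c)]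
    _ = 0 := by rw [h1, h2, mul_zero, sub_zero]
  have hzero : c * s - s * c = 0 := hred _ hd (by rw [pow_two]; exact hsq)
  exact (sub_eq_zero.mp hzero).symm
end

section
/- Let n ≥ 2 and let M be a cyclic group of order n (e.g., M = Multiplicative (ZMod n)). If R is a ring that is not commutative, then R is not M-central Armendariz. -/
/-- If `M` is a cyclic group of order `n ≥ 2` and `R` is a non-commutative ring,
then `R` is not `M`-central Armendariz. -/
theorem stmt_9 (n : ℕ) (hn : 2 ≤ n) (R : Type*) [Ring R]
    (hnc : ¬ ∀ a b : R, a * b = b * a) :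
    ¬ (∀ α β : MonoidAlgebra R (Multiplicative (ZMod n)), α * β = 0 →
      ∀ g ∈ α.coeff.support, ∀ h ∈ β.coeff.support, α.coeff g * β.coeff h ∈ Set.center R) := by
  intro H
  push_neg at hnc
  obtain ⟨a, b, hab⟩ := hnc
  haveI : Fact (1 < n) := ⟨hn⟩
  haveI : NeZero n := ⟨by omega⟩
  have h10 : (1 : ZMod n) ≠ 0 := one_ne_zero
  set g1 : Multiplicative (ZMod n) := Multiplicative.ofAdd 1 with hg1
  have hg1ne : g1 ≠ 1 := fun h => h10 (congrArg Multiplicative.toAdd h)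
  set α : MonoidAlgebra R (Multiplicative (ZMod n)) :=
    MonoidAlgebra.single 1 1 - MonoidAlgebra.single g1 1 with hα
  set β : MonoidAlgebra R (Multiplicative (ZMod n)) :=
    ∑ k : ZMod n, MonoidAlgebra.single (Multiplicative.ofAdd k) b with hβ
  have hgβ : MonoidAlgebra.single g1 (1:R) * β = β := by
    rw [hβ, Finset.mul_sum]
    have h2 : ∀ k : ZMod n, MonoidAlgebra.single g1 (1:R) *
        MonoidAlgebra.single (Multiplicative.ofAdd k) b
        = MonoidAlgebra.single (Multiplicative.ofAdd (1 + k)) b := fun k => by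
      simp [MonoidAlgebra.single_mul_single, g1, ← ofAdd_add]
    simp_rw [h2]
    exact Fintype.sum_equiv (Equiv.addLeft 1) _ _ (fun k => rfl)
  have hprod : α * β = 0 := by
    rw [hα, sub_mul, hgβ]
    have : MonoidAlgebra.single (1 : Multiplicative (ZMod n)) (1:R) = 1 := rfl
    rw [this, one_mul, sub_self]
  have hβ1 : β.coeff 1 = b := by
    rw [hβ, MonoidAlgebra.coeff_sum, Finsupp.finset_sum_apply]
    rw [Finset.sum_eq_single (0 : ZMod n)]
    · simp [← ofAdd_zero]
    · intro k _ hk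
      rw [MonoidAlgebra.coeff_single, Finsupp.single_apply, if_neg]
      intro h
      exact hk (by simpa [← ofAdd_zero, Multiplicative.ofAdd.apply_eq_iff_eq] using h)
    · simp
  have hα1 : α.coeff 1 = 1 := by
    rw [hα, MonoidAlgebra.coeff_sub, Finsupp.sub_apply]
    simp [MonoidAlgebra.coeff_single, Finsupp.single_apply, hg1ne]
  have hbne : b ≠ 0 := by rintro rfl; simp at hab
  have h1R : (1 : R) ≠ 0 := by
    intro h
    apply hab
    have hz : ∀ x : R, x = 0 := fun x => by rw [← mul_one x, h, mul_zero]
    rw [hz (a * b), hz (b * a)]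
  have h1α : (1 : Multiplicative (ZMod n)) ∈ α.coeff.support := by
    rw [Finsupp.mem_support_iff, hα1]; exact h1R
  have h1β : (1 : Multiplicative (ZMod n)) ∈ β.coeff.support := by
    rw [Finsupp.mem_support_iff, hβ1]; exact hbne
  have hc := H α β hprod 1 h1α 1 h1β
  rw [hα1, hβ1, one_mul] at hc
  exact hab ((Set.mem_center_iff.mp hc).comm a).symm
end

section
/- Let M be a cancellative monoid and N a nonempty subsemigroup of M that is a two-sided ideal of M (i.e., mn ∈ N and nm ∈ N for all m ∈ M, n ∈ N). Let R be a ring that is N-central Armendariz: whenever α, β in the (non-unital) semigroup algebra R[N] satisfy αβ = 0, then (α g)·(β h) lies in the center of R for every g in the support of α and every h in the support of β. Then R is M-central Armendariz. -/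
/-- Let `M` be a cancellative monoid and `N` a nonempty subsemigroup of `M` which is a
two-sided ideal of `M`. If `R` is `N`-central Armendariz, then `R` is `M`-central Armendariz. -/
theorem stmt_11 (M R : Type*) [Monoid M] [Ring R]
    (hcancel₁ : ∀ m g h : M, m * g = m * h → g = h)
    (hcancel₂ : ∀ m g h : M, g * m = h * m → g = h)
    (N : Subsemigroup M) (hN : (N : Set M).Nonempty)
    (hideal : ∀ m : M, ∀ n ∈ N, m * n ∈ N ∧ n * m ∈ N)
    (hNA : ∀ α β : MonoidAlgebra R N, α * β = 0 →
      ∀ g ∈ α.coeff.support, ∀ h ∈ β.coeff.support, α.coeff g * β.coeff h ∈ Set.center R) :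
    ∀ α β : MonoidAlgebra R M, α * β = 0 →
      ∀ g ∈ α.coeff.support, ∀ h ∈ β.coeff.support, α.coeff g * β.coeff h ∈ Set.center R := by
  obtain ⟨n, hn⟩ := hN
  intro α β hab g hg h hh
  set L : M → N := fun g => ⟨n * g, (hideal g n hn).2⟩ with hLdef
  set Rm : M → N := fun h => ⟨h * n, (hideal h n hn).1⟩ with hRdef
  have hL : Function.Injective L := by
    intro a b hab'
    exact hcancel₁ n a b (by simpa [hLdef, Subtype.ext_iff] using hab')
  have hR : Function.Injective Rm := by
    intro a b hab'
    exact hcancel₂ n a b (by simpa [hRdef, Subtype.ext_iff] using hab')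
  set f : M → N := fun t => ⟨n * t * n, N.mul_mem (hideal t n hn).2 hn⟩ with hfdef
  set α' : MonoidAlgebra R N := MonoidAlgebra.mapDomain L α with hα'
  set β' : MonoidAlgebra R N := MonoidAlgebra.mapDomain Rm β with hβ'
  have key : α' * β' = 0 := by
    have heq : α' * β'
        = MonoidAlgebra.mapDomain f (α * β) := by
      rw [hα', hβ']
      rw [MonoidAlgebra.mul_def, MonoidAlgebra.mul_def]
      rw [MonoidAlgebra.coeff_mapDomain, Finsupp.sum_mapDomain_index_inj hL]
      refine Eq.trans ?_ (MonoidAlgebra.mapDomain_sum _ _ _).symm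
      refine Finsupp.sum_congr fun g' _ => ?_
      rw [MonoidAlgebra.coeff_mapDomain, Finsupp.sum_mapDomain_index_inj hR]
      refine Eq.trans ?_ (MonoidAlgebra.mapDomain_sum _ _ _).symm
      refine Finsupp.sum_congr fun h' _ => ?_
      rw [MonoidAlgebra.mapDomain_single]
      congr 1
      simp only [hLdef, hRdef, hfdef]
      ext
      simp [MulMemClass.mk_mul_mk, mul_assoc]
    rw [heq, hab, MonoidAlgebra.mapDomain_zero]
  have := hNA _ _ key (L g) ?_ (Rm h) ?_
  · rwa [hα', hβ', MonoidAlgebra.coeff_mapDomain, MonoidAlgebra.coeff_mapDomain, Finsupp.mapDomain_apply hL, Finsupp.mapDomain_apply hR] at this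
  · rw [hα', MonoidAlgebra.coeff_mapDomain, Finsupp.mem_support_iff, Finsupp.mapDomain_apply hL]
    exact Finsupp.mem_support_iff.mp hg
  · rw [hβ', MonoidAlgebra.coeff_mapDomain, Finsupp.mem_support_iff, Finsupp.mapDomain_apply hR]
    exact Finsupp.mem_support_iff.mp hh
end

section
/- Let M be a strictly totally ordered monoid with at least two elements (a monoid with a total order such that g < g' implies gh < g'h and hg < hg' for all g, g', h ∈ M) and let R be an M-central Armendariz ring. Then R is a Baer ring if and only if the monoid ring R[M] is a Baer ring. -/
private lemma red_comm {R : Type*} [Ring R] (hred : ∀ x : R, x * x = 0 → x = 0)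
    {a b : R} (h : a * b = 0) : b * a = 0 := by
  apply hred
  rw [mul_assoc, ← mul_assoc a b a, h, zero_mul, mul_zero]

private lemma red_aba {R : Type*} [Ring R] (hred : ∀ x : R, x * x = 0 → x = 0)
    {a b : R} (h : a * b * a = 0) : a * b = 0 := by
  have hba : b * a = 0 := by
    apply hred
    rw [mul_assoc, ← mul_assoc a b a, h, mul_zero]
  exact red_comm hred hba

private lemma inner_lemma {R M : Type*} [Ring R] [LinearOrder M]
    (hred : ∀ x : R, x * x = 0 → x = 0) (A B : M → R) :
    ∀ T : Finset (M × M),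
      (∀ p ∈ T, ∀ q ∈ T, p.1 = q.1 → p = q) →
      (∀ p ∈ T, ∀ q ∈ T, p.1 < q.1 → A p.1 * B q.2 = 0) →
      (∑ p ∈ T, A p.1 * B p.2) = 0 →
      ∀ p ∈ T, A p.1 * B p.2 = 0 := by
  intro T
  induction T using Finset.strongInduction with
  | _ T ih =>
    intro hinj hzero hsum p hp
    have hne : (T.image Prod.fst).Nonempty := ⟨p.1, Finset.mem_image_of_mem _ hp⟩
    obtain ⟨p₀, hp₀T, hp₀1⟩ := Finset.mem_image.mp ((T.image Prod.fst).min'_mem hne)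
    have hlt : ∀ q ∈ T, q ≠ p₀ → p₀.1 < q.1 := by
      intro q hq hne'
      refine lt_of_le_of_ne ?_ ?_
      · rw [hp₀1]; exact Finset.min'_le _ _ (Finset.mem_image_of_mem _ hq)
      · intro heq
        exact hne' (hinj q hq p₀ hp₀T heq.symm)
    have key : A p₀.1 * B p₀.2 = 0 := by
      have h1 : ∑ q ∈ T, A q.1 * B q.2 * A p₀.1 = 0 := by
        rw [← Finset.sum_mul, hsum, zero_mul]
      have h2 : A p₀.1 * B p₀.2 * A p₀.1 = 0 := by
        rw [← Finset.sum_eq_single_of_mem p₀ hp₀T (f := fun q => A q.1 * B q.2 * A p₀.1) ?_]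
        · exact h1
        · intro q hq hqne
          show A q.1 * B q.2 * A p₀.1 = 0
          have hz : A p₀.1 * B q.2 = 0 := hzero p₀ hp₀T q hq (hlt q hq hqne)
          rw [mul_assoc, red_comm hred hz, mul_zero]
      exact red_aba hred h2
    rcases eq_or_ne p p₀ with rfl | hne'
    · exact key
    · refine ih (T.erase p₀) (Finset.erase_ssubset hp₀T)
        (fun a ha b hb hab => hinj a (Finset.mem_of_mem_erase ha) b (Finset.mem_of_mem_erase hb) hab)
        (fun a ha b hb hab => hzero a (Finset.mem_of_mem_erase ha) b (Finset.mem_of_mem_erase hb) hab)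
        ?_ p (Finset.mem_erase_of_ne_of_mem hne' hp)
      rw [Finset.sum_erase_eq_sub hp₀T, hsum, key, sub_zero]

open Finset in
private lemma outer_lemma {M R : Type*} [Monoid M] [LinearOrder M] [Ring R]
    (hstrict₁ : ∀ g g' h : M, g < g' → g * h < g' * h)
    (hstrict₂ : ∀ g g' h : M, g < g' → h * g < h * g')
    (hred : ∀ x : R, x * x = 0 → x = 0)
    (inner : ∀ (A B : M → R) (T : Finset (M × M)),
      (∀ p ∈ T, ∀ q ∈ T, p.1 = q.1 → p = q) →
      (∀ p ∈ T, ∀ q ∈ T, p.1 < q.1 → A p.1 * B q.2 = 0) →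
      (∑ p ∈ T, A p.1 * B p.2) = 0 →
      ∀ p ∈ T, A p.1 * B p.2 = 0)
    (α β : MonoidAlgebra R M) (hmul : α * β = 0) :
    ∀ g h : M, α.coeff g * β.coeff h = 0 := by
  classical
  set P : Finset M := (α.coeff.support ×ˢ β.coeff.support).image (fun p => p.1 * p.2) with hP
  suffices H : ∀ n : ℕ, ∀ v : M, (P.filter (· < v)).card = n →
      ∀ g h : M, g ∈ α.coeff.support → h ∈ β.coeff.support → g * h = v → α.coeff g * β.coeff h = 0 by
    intro g h
    by_cases hg : g ∈ α.coeff.support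
    · by_cases hh : h ∈ β.coeff.support
      · exact H _ (g * h) rfl g h hg hh rfl
      · rw [Finsupp.notMem_support_iff.mp hh, mul_zero]
    · rw [Finsupp.notMem_support_iff.mp hg, zero_mul]
  intro n
  induction n using Nat.strong_induction_on with
  | _ n ihn =>
    intro v hcard g h hg hh hv
    have IH : ∀ g' h' : M, g' ∈ α.coeff.support → h' ∈ β.coeff.support → g' * h' < v →
        α.coeff g' * β.coeff h' = 0 := by
      intro g' h' hg' hh' hlt
      have hu : g' * h' ∈ P := mem_image.mpr ⟨(g', h'), mem_product.mpr ⟨hg', hh'⟩, rfl⟩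
      have hss : P.filter (· < g' * h') ⊂ P.filter (· < v) := by
        refine Finset.ssubset_iff_of_subset ?_ |>.mpr ⟨g' * h', ?_, ?_⟩
        · intro x hx
          rw [mem_filter] at hx ⊢
          exact ⟨hx.1, hx.2.trans hlt⟩
        · exact mem_filter.mpr ⟨hu, hlt⟩
        · simp
      have hlt' : (P.filter (· < g' * h')).card < n := hcard ▸ Finset.card_lt_card hss
      exact ihn _ hlt' (g' * h') rfl g' h' hg' hh' rfl
    set T : Finset (M × M) := (α.coeff.support ×ˢ β.coeff.support).filter (fun p => p.1 * p.2 = v) with hT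
    have hsum : ∑ p ∈ T, α.coeff p.1 * β.coeff p.2 = 0 := by
      have h0 : (α * β).coeff v = 0 := by rw [hmul]; rfl
      rw [MonoidAlgebra.mul_apply] at h0
      rw [hT, Finset.sum_filter, Finset.sum_product]
      exact h0
    have hinj : ∀ p ∈ T, ∀ q ∈ T, p.1 = q.1 → p = q := by
      intro p hp q hq h1
      rw [hT, mem_filter] at hp hq
      rcases lt_trichotomy p.2 q.2 with hlt | heq | hlt
      · exact absurd (hq.2 ▸ h1 ▸ hp.2 ▸ hstrict₂ p.2 q.2 p.1 hlt) (lt_irrefl _)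
      · exact Prod.ext h1 heq
      · exact absurd (hp.2 ▸ h1 ▸ hq.2 ▸ hstrict₂ q.2 p.2 q.1 hlt) (lt_irrefl _)
    have hzero : ∀ p ∈ T, ∀ q ∈ T, p.1 < q.1 → α.coeff p.1 * β.coeff q.2 = 0 := by
      intro p hp q hq hlt
      rw [hT, mem_filter, mem_product] at hp hq
      exact IH p.1 q.2 hp.1.1 hq.1.2 (hq.2 ▸ hstrict₁ p.1 q.1 q.2 hlt)
    exact inner (fun m => α.coeff m) (fun m => β.coeff m) T hinj hzero hsum (g, h)
      (mem_filter.mpr ⟨mem_product.mpr ⟨hg, hh⟩, hv⟩)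

private lemma abelian_aux {M R : Type*} [Monoid M] [Nontrivial M] [Ring R]
    (hCA : ∀ α β : MonoidAlgebra R M, α * β = 0 →
      ∀ g ∈ α.coeff.support, ∀ h ∈ β.coeff.support, α.coeff g * β.coeff h ∈ Set.center R)
    (e : R) (he : e * e = e) (r : R) : e * r * (1 - e) = 0 := by
  classical
  set a : R := e * r * (1 - e) with ha
  have hea : e * a = a := by rw [ha, ← mul_assoc, ← mul_assoc, he]
  have hae : a * e = 0 := by
    have h1 : (1 - e) * e = 0 := by rw [sub_mul, one_mul, he, sub_self]
    rw [ha, mul_assoc, h1, mul_zero]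
  have haa : a * a = 0 := by
    have h2 : a * (e * a) = 0 := by rw [← mul_assoc, hae, zero_mul]
    rwa [hea] at h2
  by_contra hane
  obtain ⟨g, hg⟩ := exists_ne (1 : M)
  set α : MonoidAlgebra R M := MonoidAlgebra.single 1 e + MonoidAlgebra.single g a with hα
  set β : MonoidAlgebra R M :=
    MonoidAlgebra.single 1 (1 - e) + MonoidAlgebra.single g (-a) with hβ
  have hmul : α * β = 0 := by
    rw [hα, hβ, mul_add, add_mul, add_mul]
    rw [MonoidAlgebra.single_mul_single, MonoidAlgebra.single_mul_single,
      MonoidAlgebra.single_mul_single, MonoidAlgebra.single_mul_single]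
    have e1 : e * (1 - e) = 0 := by rw [mul_sub, mul_one, he, sub_self]
    have e2 : e * -a = -a := by rw [mul_neg, hea]
    have e3 : a * (1 - e) = a := by rw [mul_sub, mul_one, hae, sub_zero]
    have e4 : a * -a = 0 := by rw [mul_neg, haa, neg_zero]
    rw [e1, e2, e3, e4, MonoidAlgebra.single_zero, MonoidAlgebra.single_zero, one_mul, mul_one]
    rw [add_zero, zero_add, ← MonoidAlgebra.single_add, add_neg_cancel, MonoidAlgebra.single_zero]
  have hα1 : α.coeff 1 = e := by
    rw [hα]
    rw [MonoidAlgebra.coeff_add, Finsupp.add_apply, MonoidAlgebra.coeff_single, MonoidAlgebra.coeff_single, Finsupp.single_eq_same, Finsupp.single_eq_of_ne' hg, add_zero]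
  have hβg : β.coeff g = -a := by
    rw [hβ]
    rw [MonoidAlgebra.coeff_add, Finsupp.add_apply, MonoidAlgebra.coeff_single, MonoidAlgebra.coeff_single, Finsupp.single_eq_of_ne' (Ne.symm hg), Finsupp.single_eq_same, zero_add]
  have hene : e ≠ 0 := by
    intro h0
    apply hane
    rw [ha, h0, zero_mul, zero_mul]
  have h1s : (1 : M) ∈ α.coeff.support := Finsupp.mem_support_iff.mpr (by rw [hα1]; exact hene)
  have hgs : g ∈ β.coeff.support := Finsupp.mem_support_iff.mpr (by rw [hβg]; exact neg_ne_zero.mpr hane)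
  have hcent := hCA α β hmul 1 h1s g hgs
  rw [hα1, hβg] at hcent
  have hcent' : e * -a ∈ Set.center R := hcent
  rw [mul_neg, hea] at hcent'
  have hcomm := (Set.mem_center_iff.mp hcent').comm e
  -- hcomm : -a * e = e * -a
  apply hane
  have : -a * e = e * -a := hcomm
  rw [neg_mul, hae, neg_zero, mul_neg, hea] at this
  exact (neg_eq_zero.mp this.symm)

private lemma abelian_lemma {M R : Type*} [Monoid M] [Nontrivial M] [Ring R]
    (hCA : ∀ α β : MonoidAlgebra R M, α * β = 0 →
      ∀ g ∈ α.coeff.support, ∀ h ∈ β.coeff.support, α.coeff g * β.coeff h ∈ Set.center R)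
    (e : R) (he : e * e = e) (r : R) : e * r = r * e := by
  have h1 : e * r * (1 - e) = 0 := abelian_aux hCA e he r
  have he' : (1 - e) * (1 - e) = 1 - e := by
    rw [sub_mul, one_mul, mul_sub, mul_one, he, sub_self, sub_zero]
  have h2 : (1 - e) * r * (1 - (1 - e)) = 0 := abelian_aux hCA (1 - e) he' r
  rw [sub_sub_cancel] at h2
  -- h2 : (1 - e) * r * e = 0
  have h1' : e * r - e * r * e = 0 := by rw [← h1, mul_sub, mul_one]
  have h2' : r * e - e * r * e = 0 := by
    rw [← h2, sub_mul, one_mul, sub_mul]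
  have k1 : e * r = e * r * e := sub_eq_zero.mp h1'
  have k2 : r * e = e * r * e := sub_eq_zero.mp h2'
  rw [k1, k2]

/-- Let `M` be a strictly totally ordered monoid with `|M| ≥ 2` and `R` an `M`-central
Armendariz ring. Then `R` is a Baer ring iff `R[M]` is a Baer ring. -/
theorem stmt_13 (M R : Type*) [Monoid M] [Nontrivial M] [LinearOrder M] [Ring R]
    (hstrict₁ : ∀ g g' h : M, g < g' → g * h < g' * h)
    (hstrict₂ : ∀ g g' h : M, g < g' → h * g < h * g')
    (hCA : ∀ α β : MonoidAlgebra R M, α * β = 0 →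
      ∀ g ∈ α.coeff.support, ∀ h ∈ β.coeff.support, α.coeff g * β.coeff h ∈ Set.center R) :
    (∀ W : Set R, ∃ e : R, IsIdempotentElem e ∧
        ∀ x : R, (∀ w ∈ W, w * x = 0) ↔ ∃ r : R, x = e * r) ↔
      (∀ W : Set (MonoidAlgebra R M), ∃ e : MonoidAlgebra R M, IsIdempotentElem e ∧
        ∀ x : MonoidAlgebra R M, (∀ w ∈ W, w * x = 0) ↔
          ∃ s : MonoidAlgebra R M, x = e * s) := by
  classical
  constructor
  · -- R Baer → R[M] Baer
    intro hBaer W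
    have habelian : ∀ e r : R, e * e = e → e * r = r * e := fun e r he =>
      abelian_lemma hCA e he r
    have hred : ∀ x : R, x * x = 0 → x = 0 := by
      intro x hx
      obtain ⟨e, he, hann⟩ := hBaer {x}
      obtain ⟨r, hr⟩ := (hann x).mp (by rintro w rfl; exact hx)
      have hxe : x * e = 0 :=
        (hann e).mpr ⟨e, he.eq.symm⟩ x (Set.mem_singleton x)
      have hex : e * x = x := by rw [hr, ← mul_assoc, he.eq]
      rw [← hex, habelian e x he.eq, hxe]
    have hArm : ∀ α β : MonoidAlgebra R M, α * β = 0 → ∀ g h : M, α.coeff g * β.coeff h = 0 :=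
      fun α β hmul => outer_lemma hstrict₁ hstrict₂ hred (inner_lemma hred) α β hmul
    obtain ⟨e, he, hann⟩ := hBaer {r : R | ∃ w ∈ W, ∃ g : M, w.coeff g = r}
    refine ⟨MonoidAlgebra.single 1 e, ?_, ?_⟩
    · show MonoidAlgebra.single (1 : M) e * MonoidAlgebra.single 1 e = MonoidAlgebra.single 1 e
      rw [MonoidAlgebra.single_mul_single, one_mul, he.eq]
    · intro x
      constructor
      · intro hx
        refine ⟨x, ?_⟩
        have hcoef : ∀ m : M, e * x.coeff m = x.coeff m := by
          intro m
          have hx0 : ∀ w' ∈ {r : R | ∃ w ∈ W, ∃ g : M, w.coeff g = r}, w' * x.coeff m = 0 := by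
            rintro w ⟨w', hw', g, rfl⟩
            exact hArm w' x (hx w' hw') g m
          obtain ⟨r, hr⟩ := (hann (x.coeff m)).mp hx0
          rw [hr, ← mul_assoc, he.eq]
        ext m
        rw [MonoidAlgebra.single_one_mul_apply, hcoef]
      · rintro ⟨s, rfl⟩ w hw
        have he0 : ∀ w' ∈ {r : R | ∃ w ∈ W, ∃ g : M, w.coeff g = r}, w' * e = 0 :=
          (hann e).mpr ⟨e, he.eq.symm⟩
        have hwE : w * MonoidAlgebra.single (1 : M) e = 0 := by
          ext m
          rw [MonoidAlgebra.mul_single_one_apply]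
          exact he0 (w.coeff m) ⟨w, hw, m, rfl⟩
        rw [← mul_assoc, hwE, zero_mul]
  · -- R[M] Baer → R Baer
    intro hBaer W
    set ε : MonoidAlgebra R M →+* R :=
      MonoidAlgebra.liftNCRingHom (RingHom.id R) 1 (fun _ _ => by simp [Commute.one_right]) with hε
    have hεs : ∀ (m : M) (r : R), ε (MonoidAlgebra.single m r) = r := by
      intro m r
      simp [hε, MonoidAlgebra.liftNCRingHom, MonoidAlgebra.liftNC_single]
    obtain ⟨E, hE, hann⟩ := hBaer ((fun w => MonoidAlgebra.single (1 : M) w) '' W)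
    refine ⟨ε E, ?_, ?_⟩
    · show ε E * ε E = ε E
      rw [← map_mul, hE.eq]
    · intro x
      constructor
      · intro hx
        have hx0 : ∀ w' ∈ (fun w => MonoidAlgebra.single (1 : M) w) '' W,
            w' * MonoidAlgebra.single (1 : M) x = 0 := by
          rintro w' ⟨w, hw, rfl⟩
          rw [MonoidAlgebra.single_mul_single, one_mul, hx w hw, MonoidAlgebra.single_zero]
        obtain ⟨s, hs⟩ := (hann (MonoidAlgebra.single (1 : M) x)).mp hx0
        refine ⟨ε s, ?_⟩
        have := congrArg ε hs
        rwa [map_mul, hεs] at this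
      · rintro ⟨r, rfl⟩ w hw
        have hWE : MonoidAlgebra.single (1 : M) w * E = 0 :=
          (hann E).mpr ⟨1, (mul_one E).symm⟩ _ ⟨w, hw, rfl⟩
        have := congrArg ε hWE
        rw [map_mul, hεs, map_zero] at this
        rw [← mul_assoc, this, zero_mul]
end

section
/- Let R be a nontrivial ring, n ≥ 2, and M a monoid with at least two elements. Then the full matrix ring Matₙ(R) (Mathlib: Matrix (Fin n) (Fin n) R) is not M-central Armendariz. -/
/-- For a nontrivial ring `R`, `n ≥ 2`, and a monoid `M` with at least two elements,
the matrix ring `Matₙ(R)` is not `M`-central Armendariz. -/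
theorem stmt_16 (M R : Type*) [Monoid M] [Nontrivial M] [Ring R] [Nontrivial R]
    (n : ℕ) (hn : 2 ≤ n) :
    ¬ (∀ α β : MonoidAlgebra (Matrix (Fin n) (Fin n) R) M, α * β = 0 →
      ∀ g ∈ α.coeff.support, ∀ h ∈ β.coeff.support,
        α.coeff g * β.coeff h ∈ Set.center (Matrix (Fin n) (Fin n) R)) := by
  intro H
  obtain ⟨m, hm⟩ := exists_ne (1 : M)
  set i0 : Fin n := ⟨0, by omega⟩ with hi0
  set i1 : Fin n := ⟨1, by omega⟩ with hi1
  have hne : i0 ≠ i1 := by simp [hi0, hi1, Fin.ext_iff]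
  set E11 : Matrix (Fin n) (Fin n) R := Matrix.single i0 i0 1 with hE11
  set E12 : Matrix (Fin n) (Fin n) R := Matrix.single i0 i1 1 with hE12
  set E22 : Matrix (Fin n) (Fin n) R := Matrix.single i1 i1 1 with hE22
  have hE12ne : E12 ≠ 0 := by
    intro h
    have h2 := congrFun (congrFun h i0) i1
    rw [hE12, Matrix.single_apply_same] at h2
    exact one_ne_zero h2
  set α : MonoidAlgebra (Matrix (Fin n) (Fin n) R) M :=
    MonoidAlgebra.single 1 E11 + MonoidAlgebra.single m (-E12) with hα
  set β : MonoidAlgebra (Matrix (Fin n) (Fin n) R) M :=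
    MonoidAlgebra.single 1 E22 + MonoidAlgebra.single m E12 with hβ
  have h1112 : E11 * E12 = E12 := by
    rw [hE11, hE12, Matrix.single_mul_single_same, one_mul]
  have h1122 : E11 * E22 = 0 := Matrix.single_mul_single_of_ne _ _ _ _ hne _
  have h1222 : E12 * E22 = E12 := by
    rw [hE12, hE22, Matrix.single_mul_single_same, one_mul]
  have h1212 : E12 * E12 = 0 := Matrix.single_mul_single_of_ne _ _ _ _ hne.symm _
  have h1211 : E12 * E11 = 0 := Matrix.single_mul_single_of_ne _ _ _ _ hne.symm _
  have hmul : α * β = 0 := by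
    rw [hα, hβ]
    simp only [add_mul, mul_add, MonoidAlgebra.single_mul_single, one_mul, mul_one,
      neg_mul, h1112, h1122, h1222, h1212, MonoidAlgebra.single_zero, neg_zero]
    rw [show MonoidAlgebra.single m (-E12) = -MonoidAlgebra.single m E12 from MonoidAlgebra.single_neg m E12]
    abel
  have hα1 : α.coeff 1 = E11 := by
    classical
    rw [hα, MonoidAlgebra.coeff_add, Finsupp.add_apply, MonoidAlgebra.single_apply, MonoidAlgebra.single_apply]
    simp [hm, Ne.symm hm]
  have hβm : β.coeff m = E12 := by
    classical
    rw [hβ, MonoidAlgebra.coeff_add, Finsupp.add_apply, MonoidAlgebra.single_apply, MonoidAlgebra.single_apply]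
    simp [hm, Ne.symm hm]
  have hgs : (1 : M) ∈ α.coeff.support := by
    rw [Finsupp.mem_support_iff, hα1, hE11]
    intro h
    have h2 := congrFun (congrFun h i0) i0
    rw [Matrix.single_apply_same] at h2
    exact one_ne_zero h2
  have hhs : m ∈ β.coeff.support := by
    rw [Finsupp.mem_support_iff, hβm]; exact hE12ne
  have hc := H α β hmul 1 hgs m hhs
  rw [hα1, hβm, h1112] at hc
  have := (hc.comm E11).eq
  rw [h1112, h1211] at this
  exact hE12ne this.symm
end

section
/- Let ℤ₂ be the field of integers modulo 2 and let R be the Hamiltonian quaternions over ℤ₂ (Mathlib: Quaternion (ZMod 2)). Then for every monoid M with at least two elements, R is not M-Armendariz: explicitly, for e the identity of M and g ≠ e, the element α = (1+i)·e + (1+j)·g of R[M] satisfies α² = 0, yet (1+i)·(1+j) ≠ 0. -/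
/-- The Hamiltonian quaternions over `ℤ₂` are not `M`-Armendariz for any monoid `M` with
at least two elements: explicitly, for `g ≠ e`, `α = (1+i)·e + (1+j)·g` squares to zero
while `(1+i)(1+j) ≠ 0`. -/
theorem stmt_17 (M : Type*) [Monoid M] [Nontrivial M] :
    (¬ ∀ α β : MonoidAlgebra (Quaternion (ZMod 2)) M, α * β = 0 →
        ∀ g ∈ α.coeff.support, ∀ h ∈ β.coeff.support, α.coeff g * β.coeff h = 0) ∧
      ∀ g : M, g ≠ 1 →
        (MonoidAlgebra.single (1 : M) (1 + (⟨0, 1, 0, 0⟩ : Quaternion (ZMod 2))) +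
              MonoidAlgebra.single g (1 + (⟨0, 0, 1, 0⟩ : Quaternion (ZMod 2)))) *
            (MonoidAlgebra.single (1 : M) (1 + (⟨0, 1, 0, 0⟩ : Quaternion (ZMod 2))) +
              MonoidAlgebra.single g (1 + (⟨0, 0, 1, 0⟩ : Quaternion (ZMod 2)))) = 0 ∧
          (1 + (⟨0, 1, 0, 0⟩ : Quaternion (ZMod 2))) *
            (1 + (⟨0, 0, 1, 0⟩ : Quaternion (ZMod 2))) ≠ 0 := by
  set a : Quaternion (ZMod 2) := 1 + ⟨0,1,0,0⟩ with ha
  set b : Quaternion (ZMod 2) := 1 + ⟨0,0,1,0⟩ with hb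
  have haa : a * a = 0 := by ext <;> simp [ha, Quaternion.ext_iff] <;> decide
  have hbb : b * b = 0 := by ext <;> simp [hb, Quaternion.ext_iff] <;> decide
  have hcomm : a * b + b * a = 0 := by
    ext <;> simp [ha, hb, Quaternion.ext_iff] <;> decide
  have hab : a * b ≠ 0 := by
    simp [ha, hb, Quaternion.ext_iff]; decide
  have ha0 : a ≠ 0 := by simp [ha, Quaternion.ext_iff]; decide
  have hb0 : b ≠ 0 := by simp [hb, Quaternion.ext_iff]; decide
  have key : ∀ g : M, g ≠ 1 →
      (MonoidAlgebra.single (1 : M) a + MonoidAlgebra.single g b) *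
        (MonoidAlgebra.single (1 : M) a + MonoidAlgebra.single g b) = 0 := by
    intro g hg
    rw [mul_add, add_mul, add_mul]
    simp only [MonoidAlgebra.single_mul_single, one_mul, mul_one, haa, hbb,
      MonoidAlgebra.single_zero]
    rw [zero_add, add_zero, ← MonoidAlgebra.single_add, add_comm, hcomm, MonoidAlgebra.single_zero]
  refine ⟨?_, fun g hg => ⟨key g hg, hab⟩⟩
  intro h
  obtain ⟨g, hg⟩ := exists_ne (1 : M)
  set α := MonoidAlgebra.single (1 : M) a + MonoidAlgebra.single g b with hα
  have h1 : α.coeff 1 = a := by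
    show (Finsupp.single (1:M) a + Finsupp.single g b) 1 = a
    rw [Finsupp.add_apply, Finsupp.single_eq_same, Finsupp.single_eq_of_ne' hg, add_zero]
  have h2 : α.coeff g = b := by
    show (Finsupp.single (1:M) a + Finsupp.single g b) g = b
    rw [Finsupp.add_apply, Finsupp.single_eq_same, Finsupp.single_eq_of_ne' (Ne.symm hg), zero_add]
  have := h α α (key g hg) 1 (by simp [Finsupp.mem_support_iff, h1, ha0])
    g (by simp [Finsupp.mem_support_iff, h2, hb0])
  rw [h1, h2] at this
  exact hab this
end
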